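/- arXiv:2509.10141 — 7 statements merged into one kernel-verified Lean document; each statement's English description precedes it below -/
import Mathlib

section
/- Let U, V be d×d unitary matrices with d ≥ 2, let |ψ⟩ be a unit vector, and set f_V = |⟨ψ|U†V|ψ⟩|². For any f_W ∈ [0,1] and any unitary W with |⟨ψ|U†W|ψ⟩|² = f_W, the absolute trace satisfies |Tr(V†W)| ≤ 2(√(f_V f_W) + √((1−f_V)(1−f_W))) + (d−2). -/
open Matrix Complex Finset
open scoped InnerProductSpace

/-- Embed a plain vector into Euclidean space. -/
noncomputable def sepEmb {d : ℕ} (v : Fin d → ℂ) : EuclideanSpace ℂ (Fin d) :=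
  (WithLp.equiv 2 (Fin d → ℂ)).symm v

lemma sepEmb_inner {d : ℕ} (x y : Fin d → ℂ) :
    ⟪sepEmb x, sepEmb y⟫_ℂ = star x ⬝ᵥ y :=
  (EuclideanSpace.inner_toLp_toLp x y).trans (dotProduct_comm _ _)

lemma sepEmb_norm_sq {d : ℕ} (v : Fin d → ℂ) :
    ((‖sepEmb v‖ : ℂ)) ^ 2 = star v ⬝ᵥ v := by
  rw [← sepEmb_inner]
  exact (inner_self_eq_norm_sq_to_K (sepEmb v)).symm

lemma sep_unitary_dot {d : ℕ} {M : Matrix (Fin d) (Fin d) ℂ}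
    (hM : Mᴴ * M = 1) (a b : Fin d → ℂ) :
    star (M.mulVec a) ⬝ᵥ (M.mulVec b) = star a ⬝ᵥ b := by
  rw [Matrix.star_mulVec, Matrix.dotProduct_mulVec, Matrix.vecMul_vecMul, hM, Matrix.vecMul_one]

lemma sep_adj_dot {d : ℕ} (M : Matrix (Fin d) (Fin d) ℂ) (a b : Fin d → ℂ) :
    star a ⬝ᵥ (Mᴴ.mulVec b) = star (M.mulVec a) ⬝ᵥ b := by
  rw [Matrix.star_mulVec, Matrix.dotProduct_mulVec]

lemma sep_adj_dot' {d : ℕ} (M : Matrix (Fin d) (Fin d) ℂ) (a b : Fin d → ℂ) :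
    star a ⬝ᵥ (M.mulVec b) = star (Mᴴ.mulVec a) ⬝ᵥ b := by
  rw [Matrix.star_mulVec, Matrix.dotProduct_mulVec, Matrix.conjTranspose_conjTranspose]

lemma sep_norm_mulVec {d : ℕ} {M : Matrix (Fin d) (Fin d) ℂ}
    (hM : Mᴴ * M = 1) (v : Fin d → ℂ) :
    ‖sepEmb (M.mulVec v)‖ = ‖sepEmb v‖ := by
  have h : ((‖sepEmb (M.mulVec v)‖ : ℂ)) ^ 2 = ((‖sepEmb v‖ : ℂ)) ^ 2 := by
    rw [sepEmb_norm_sq, sepEmb_norm_sq, sep_unitary_dot hM]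
  have h2 : ‖sepEmb (M.mulVec v)‖ ^ 2 = ‖sepEmb v‖ ^ 2 := by exact_mod_cast h
  nlinarith [norm_nonneg (sepEmb (M.mulVec v)), norm_nonneg (sepEmb v)]

lemma sep_trace_eq_sum_basis {d : ℕ} (M : Matrix (Fin d) (Fin d) ℂ)
    (b : OrthonormalBasis (Fin d) ℂ (EuclideanSpace ℂ (Fin d))) :
    M.trace = ∑ i, star (fun j => b i j) ⬝ᵥ M.mulVec (fun j => b i j) := by
  classical
  set P : Matrix (Fin d) (Fin d) ℂ := Matrix.of (fun j i => b i j) with hPdef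
  have hP : Pᴴ * P = 1 := by
    ext i k
    simp only [Matrix.mul_apply, Matrix.conjTranspose_apply, Matrix.one_apply, hPdef,
      Matrix.of_apply]
    have := b.orthonormal
    rw [orthonormal_iff_ite] at this
    have h2 := this i k
    rw [PiLp.inner_apply] at h2
    simpa [RCLike.inner_apply, mul_comm] using h2
  have hP2 : P * Pᴴ = 1 := mul_eq_one_comm.mp hP
  have key : M.trace = (Pᴴ * M * P).trace := by
    rw [Matrix.trace_mul_comm, ← Matrix.mul_assoc, hP2, Matrix.one_mul]
  rw [key, Matrix.trace]
  congr 1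
  ext i
  simp only [Matrix.diag_apply, Matrix.mul_apply, Matrix.conjTranspose_apply, hPdef,
    Matrix.of_apply, dotProduct, Matrix.mulVec, Pi.star_apply]
  simp only [Finset.sum_mul, Finset.mul_sum]
  rw [Finset.sum_comm]
  refine Finset.sum_congr rfl fun j _ => Finset.sum_congr rfl fun k _ => by ring

/-- The key inner product bound. -/
lemma sep_inner_bound {F : Type*} [NormedAddCommGroup F] [InnerProductSpace ℂ F]
    (u x y : F) (hu : ‖u‖ = 1) (hx : ‖x‖ = 1) (hy : ‖y‖ = 1) :
    ‖(⟪x, y⟫_ℂ)‖ ≤ ‖(⟪u, x⟫_ℂ)‖ * ‖(⟪u, y⟫_ℂ)‖ +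
      Real.sqrt (1 - ‖(⟪u, x⟫_ℂ)‖ ^ 2) * Real.sqrt (1 - ‖(⟪u, y⟫_ℂ)‖ ^ 2) := by
  set α := (⟪u, x⟫_ℂ) with hα
  set β := (⟪u, y⟫_ℂ) with hβ
  set x' := x - α • u with hx'
  set y' := y - β • u with hy'
  have huu : (⟪u, u⟫_ℂ) = 1 := by
    rw [inner_self_eq_norm_sq_to_K, hu]; norm_num
  have hux' : (⟪u, x'⟫_ℂ) = 0 := by
    rw [hx', inner_sub_right, inner_smul_right, huu, mul_one, ← hα, sub_self]
  have huy' : (⟪u, y'⟫_ℂ) = 0 := by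
    rw [hy', inner_sub_right, inner_smul_right, huu, mul_one, ← hβ, sub_self]
  have hx'u : (⟪x', u⟫_ℂ) = 0 := by
    rw [← inner_conj_symm, hux', map_zero]
  have hdecomp : (⟪x, y⟫_ℂ) = (starRingEnd ℂ) α * β + (⟪x', y'⟫_ℂ) := by
    have hxeq : x = α • u + x' := by rw [hx']; abel
    have hyeq : y = β • u + y' := by rw [hy']; abel
    calc (⟪x, y⟫_ℂ) = ⟪α • u + x', β • u + y'⟫_ℂ := by rw [← hxeq, ← hyeq]
      _ = (starRingEnd ℂ) α * β * ⟪u,u⟫_ℂ + (starRingEnd ℂ) α * ⟪u, y'⟫_ℂ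
            + β * ⟪x', u⟫_ℂ + ⟪x', y'⟫_ℂ := by
          rw [inner_add_left, inner_add_right, inner_add_right, inner_smul_left,
            inner_smul_left, inner_smul_right, inner_smul_right]
          ring
      _ = (starRingEnd ℂ) α * β + (⟪x', y'⟫_ℂ) := by rw [huu, huy', hx'u]; ring
  have hnx' : ‖x'‖ ^ 2 = 1 - ‖α‖ ^ 2 := by
    rw [hx', @norm_sub_sq ℂ]
    have h1 : (⟪x, α • u⟫_ℂ) = α * (starRingEnd ℂ) α := by
      rw [inner_smul_right, ← inner_conj_symm, ← hα]
    rw [h1, norm_smul, hu, hx]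
    have h2 : RCLike.re (α * (starRingEnd ℂ) α) = ‖α‖ ^ 2 := by
      rw [RCLike.mul_conj]; simp [← Complex.ofReal_pow]
    rw [h2]; ring
  have hny' : ‖y'‖ ^ 2 = 1 - ‖β‖ ^ 2 := by
    rw [hy', @norm_sub_sq ℂ]
    have h1 : (⟪y, β • u⟫_ℂ) = β * (starRingEnd ℂ) β := by
      rw [inner_smul_right, ← inner_conj_symm, ← hβ]
    rw [h1, norm_smul, hu, hy]
    have h2 : RCLike.re (β * (starRingEnd ℂ) β) = ‖β‖ ^ 2 := by
      rw [RCLike.mul_conj]; simp [← Complex.ofReal_pow]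
    rw [h2]; ring
  have hsx : Real.sqrt (1 - ‖α‖ ^ 2) = ‖x'‖ := by
    rw [← hnx', Real.sqrt_sq (norm_nonneg _)]
  have hsy : Real.sqrt (1 - ‖β‖ ^ 2) = ‖y'‖ := by
    rw [← hny', Real.sqrt_sq (norm_nonneg _)]
  rw [hdecomp, hsx, hsy]
  calc ‖(starRingEnd ℂ) α * β + (⟪x', y'⟫_ℂ)‖
      ≤ ‖(starRingEnd ℂ) α * β‖ + ‖(⟪x', y'⟫_ℂ)‖ := norm_add_le _ _
    _ ≤ ‖α‖ * ‖β‖ + ‖x'‖ * ‖y'‖ := by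
        gcongr
        · rw [norm_mul, RCLike.norm_conj]
        · exact norm_inner_le_norm _ _

lemma sep_norm_one {d : ℕ} {v : Fin d → ℂ} (hv : star v ⬝ᵥ v = 1) :
    ‖sepEmb v‖ = 1 := by
  have h : ((‖sepEmb v‖ : ℂ)) ^ 2 = 1 := by rw [sepEmb_norm_sq, hv]
  have h2 : ‖sepEmb v‖ ^ 2 = 1 := by exact_mod_cast h
  nlinarith [norm_nonneg (sepEmb v)]

lemma sep_abs_diag_le_one {d : ℕ} {M : Matrix (Fin d) (Fin d) ℂ}
    (hMs : Mᴴ * M = 1) (i : Fin d) : ‖M i i‖ ≤ 1 := by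
  have h1 : (Mᴴ * M) i i = 1 := by rw [hMs]; simp
  have h2 : (∑ j, ((‖M j i‖ : ℝ) : ℂ) ^ 2) = 1 := by
    rw [← h1, Matrix.mul_apply]
    refine Finset.sum_congr rfl fun j _ => ?_
    rw [Matrix.conjTranspose_apply]
    rw [← Complex.ofReal_pow, Complex.sq_norm, Complex.star_def, Complex.normSq_eq_conj_mul_self]
  have h3 : (∑ j, (‖M j i‖) ^ 2) = (1 : ℝ) := by
    have h2' : ((∑ j, ‖M j i‖ ^ 2 : ℝ) : ℂ) = 1 := by push_cast; exact h2
    exact_mod_cast h2'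
  have h4 : (‖M i i‖) ^ 2 ≤ 1 := by
    rw [← h3]
    exact Finset.single_le_sum (f := fun j => ‖M j i‖ ^ 2) (fun j _ => sq_nonneg _) (Finset.mem_univ i)
  nlinarith [norm_nonneg (M i i)]

set_option maxHeartbeats 1000000 in
lemma sep_abs_trace_le {d : ℕ} (hd : 2 ≤ d) (M : Matrix (Fin d) (Fin d) ℂ)
    (hM : M ∈ Matrix.unitaryGroup (Fin d) ℂ)
    (ψ : Fin d → ℂ) (hψ : star ψ ⬝ᵥ ψ = 1) :
    ‖M.trace‖ ≤ 2 * ‖star ψ ⬝ᵥ M.mulVec ψ‖ + ((d : ℝ) - 2) := by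
  classical
  obtain ⟨e, rfl⟩ : ∃ e, d = e + 2 := ⟨d - 2, by omega⟩
  have hMs : Mᴴ * M = 1 := hM.1
  have hMsH : M * Mᴴ = 1 := hM.2
  have hMH : (Mᴴ)ᴴ * Mᴴ = 1 := by rw [Matrix.conjTranspose_conjTranspose]; exact hMsH
  set m : ℂ := star ψ ⬝ᵥ M.mulVec ψ with hm
  -- trivial diagonal bound
  have htriv : ‖M.trace‖ ≤ ((e + 2 : ℕ) : ℝ) := by
    calc ‖M.trace‖ ≤ ∑ i, ‖M i i‖ :=
          norm_sum_le _ _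
      _ ≤ ∑ _i : Fin (e + 2), (1 : ℝ) := Finset.sum_le_sum fun i _ => sep_abs_diag_le_one hMs i
      _ = ((e + 2 : ℕ) : ℝ) := by simp
  -- |m| ≤ 1
  have hm1 : ‖m‖ ≤ 1 := by
    have h : m = ⟪sepEmb ψ, sepEmb (M.mulVec ψ)⟫_ℂ := (sepEmb_inner _ _).symm
    rw [h]
    calc ‖⟪sepEmb ψ, sepEmb (M.mulVec ψ)⟫_ℂ‖ ≤ ‖sepEmb ψ‖ * ‖sepEmb (M.mulVec ψ)‖ :=
          norm_inner_le_norm _ _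
      _ = 1 := by rw [sep_norm_mulVec hMs, sep_norm_one hψ]; ring
  by_cases hmeq : ‖m‖ = 1
  · calc ‖M.trace‖ ≤ ((e + 2 : ℕ) : ℝ) := htriv
      _ = 2 * ‖m‖ + (((e + 2 : ℕ) : ℝ) - 2) := by rw [hmeq]; ring
  -- main case : |m| < 1
  have hmlt : ‖m‖ < 1 := lt_of_le_of_ne hm1 hmeq
  set A : Fin (e + 2) → ℂ := Mᴴ.mulVec ψ with hA
  have hψA : star ψ ⬝ᵥ A = star m := by
    rw [hA, sep_adj_dot, Matrix.star_dotProduct, hm]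
  have hAψ : star A ⬝ᵥ ψ = m := by
    rw [Matrix.star_dotProduct, hψA, star_star]
  have hAA : star A ⬝ᵥ A = 1 := by
    rw [hA, sep_unitary_dot hMH, hψ]
  set c : Fin (e + 2) → ℂ := A - star m • ψ with hc
  have hψc : star ψ ⬝ᵥ c = 0 := by
    rw [hc, dotProduct_sub, dotProduct_smul, hψA, hψ, smul_eq_mul, mul_one,
      sub_self]
  have hcψ : star c ⬝ᵥ ψ = 0 := by
    rw [Matrix.star_dotProduct, hψc, star_zero]
  have hms : m * star m = ((‖m‖ ^ 2 : ℝ) : ℂ) := by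
    rw [show (star m) = (starRingEnd ℂ) m from rfl, Complex.mul_conj, Complex.sq_norm]
  have hcA : star c ⬝ᵥ A = ((1 - ‖m‖ ^ 2 : ℝ) : ℂ) := by
    have hstarc : star c = star A - m • star ψ := by
      rw [hc]
      ext j
      simp [Pi.star_apply, star_sub, star_smul]
    rw [hstarc, sub_dotProduct, smul_dotProduct, hAA, hψA, smul_eq_mul, hms]
    push_cast
    ring
  have hcc : star c ⬝ᵥ c = ((1 - ‖m‖ ^ 2 : ℝ) : ℂ) := by
    have h2 : star c ⬝ᵥ (star m • ψ) = 0 := by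
      rw [dotProduct_smul, hcψ, smul_zero]
    calc star c ⬝ᵥ c = star c ⬝ᵥ (A - star m • ψ) := by rw [← hc]
      _ = star c ⬝ᵥ A - star c ⬝ᵥ (star m • ψ) := dotProduct_sub _ _ _
      _ = ((1 - ‖m‖ ^ 2 : ℝ) : ℂ) := by rw [hcA, h2, sub_zero]
  -- norm of c
  set ρ : ℝ := ‖sepEmb c‖ with hρdef
  have hρ2 : ρ ^ 2 = 1 - ‖m‖ ^ 2 := by
    have h : ((ρ : ℂ)) ^ 2 = ((1 - ‖m‖ ^ 2 : ℝ) : ℂ) := (sepEmb_norm_sq c).trans hcc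
    exact_mod_cast h
  have hρpos : 0 < ρ := by
    have h1 : 0 < ρ ^ 2 := by nlinarith [norm_nonneg m]
    nlinarith [norm_nonneg (sepEmb c)]
  have hρC : (ρ : ℂ) ≠ 0 := Complex.ofReal_ne_zero.mpr hρpos.ne'
  set gv : Fin (e + 2) → ℂ := ((ρ : ℂ))⁻¹ • c with hgv
  have hψg : star ψ ⬝ᵥ gv = 0 := by rw [hgv, dotProduct_smul, hψc, smul_zero]
  have hgψ : star gv ⬝ᵥ ψ = 0 := by rw [Matrix.star_dotProduct, hψg, star_zero]
  have hstar_gv : star gv = ((ρ : ℂ))⁻¹ • star c := by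
    rw [hgv]; ext j
    simp [star_smul, Complex.conj_ofReal]
  have hgg : star gv ⬝ᵥ gv = 1 := by
    rw [hstar_gv, hgv, smul_dotProduct, dotProduct_smul, hcc]
    have h : ((1 - ‖m‖ ^ 2 : ℝ) : ℂ) = (ρ : ℂ) ^ 2 := by
      rw [← hρ2]; push_cast; ring
    rw [h, smul_eq_mul, smul_eq_mul]
    field_simp
  have hg_norm : ‖sepEmb gv‖ = 1 := sep_norm_one hgg
  have h01 : (0 : Fin (e + 2)) ≠ 1 := zero_ne_one
  -- inner product facts
  have hIψψ : ⟪sepEmb ψ, sepEmb ψ⟫_ℂ = 1 := by rw [sepEmb_inner, hψ]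
  have hIψg : ⟪sepEmb ψ, sepEmb gv⟫_ℂ = 0 := by rw [sepEmb_inner, hψg]
  have hIgψ : ⟪sepEmb gv, sepEmb ψ⟫_ℂ = 0 := by rw [sepEmb_inner, hgψ]
  have hIgg : ⟪sepEmb gv, sepEmb gv⟫_ℂ = 1 := by rw [sepEmb_inner, hgg]
  -- orthonormal family to extend
  set v : Fin (e + 2) → EuclideanSpace ℂ (Fin (e + 2)) :=
    fun i => if i = 0 then sepEmb ψ else sepEmb gv with hv
  have horth : Orthonormal ℂ (Set.restrict {0, 1} v) := by
    rw [orthonormal_iff_ite]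
    rintro ⟨i, hi⟩ ⟨j, hj⟩
    have hi' : i = 0 ∨ i = 1 := by simpa using hi
    have hj' : j = 0 ∨ j = 1 := by simpa using hj
    rcases hi' with rfl | rfl <;> rcases hj' with rfl | rfl <;>
      simp [hv, Set.restrict_apply, h01, h01.symm, Subtype.ext_iff, hIψψ, hIψg, hIgψ, hIgg, Set.restrict, hg_norm,
        sep_norm_one hψ]
  have hcard : Module.finrank ℂ (EuclideanSpace ℂ (Fin (e + 2))) = Fintype.card (Fin (e + 2)) := by
    simp
  obtain ⟨b, hb⟩ := horth.exists_orthonormalBasis_extension_of_card_eq hcard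
  have hb0 : b 0 = sepEmb ψ := by
    have h := hb 0 (by simp)
    simpa [hv] using h
  have hb1 : b 1 = sepEmb gv := by
    have h := hb 1 (by simp)
    simpa [hv, h01.symm] using h
  -- trace as a sum
  rw [sep_trace_eq_sum_basis M b]
  set f : Fin (e + 2) → ℂ := fun i => star (fun j => b i j) ⬝ᵥ M.mulVec (fun j => b i j) with hf
  have hemb : ∀ i, sepEmb (fun j => b i j) = b i := fun i => rfl
  have hfi : ∀ i, f i = ⟪b i, sepEmb (M.mulVec (fun j => b i j))⟫_ℂ := fun i =>
    (sepEmb_inner _ _).symm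
  have hnormb : ∀ i, ‖b i‖ = 1 := b.orthonormal.1
  have hnormMb : ∀ i, ‖sepEmb (M.mulVec (fun j => b i j))‖ = 1 := by
    intro i
    rw [sep_norm_mulVec hMs, hemb i]
    exact hnormb i
  have habs1 : ∀ i, ‖f i‖ ≤ 1 := by
    intro i
    rw [hfi i]
    calc ‖⟪b i, sepEmb (M.mulVec (fun j => b i j))⟫_ℂ‖
        ≤ ‖b i‖ * ‖sepEmb (M.mulVec (fun j => b i j))‖ := norm_inner_le_norm _ _
      _ = 1 := by rw [hnormb i, hnormMb i, one_mul]
  have hψfun : (fun j => b 0 j) = ψ := by funext j; rw [hb0]; rfl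
  have hf0 : f 0 = m := by rw [hf]; simp only []; rw [hψfun]
  have hgvfun : (fun j => b 1 j) = gv := by funext j; rw [hb1]; rfl
  -- bound on f 1
  have hf1 : ‖f 1‖ ≤ ‖m‖ := by
    set w : EuclideanSpace ℂ (Fin (e + 2)) := sepEmb (M.mulVec gv) with hw
    have hw1 : ‖w‖ = 1 := by rw [hw, sep_norm_mulVec hMs]; exact hg_norm
    have hψw : ⟪sepEmb ψ, w⟫_ℂ = (ρ : ℂ) := by
      rw [hw, sepEmb_inner, hgv, Matrix.mulVec_smul, dotProduct_smul]
      have hMc : star ψ ⬝ᵥ M.mulVec c = ((ρ : ℂ)) ^ 2 := by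
        rw [sep_adj_dot' M ψ c, ← hA, Matrix.star_dotProduct, hcA]
        rw [show (star ((1 - ‖m‖ ^ 2 : ℝ) : ℂ)) = ((1 - ‖m‖ ^ 2 : ℝ) : ℂ)
          from Complex.conj_ofReal _]
        rw [← hρ2]; push_cast; ring
      rw [hMc, smul_eq_mul]
      field_simp
    -- Bessel's inequality with the orthonormal pair
    have hpair : Orthonormal ℂ (![sepEmb ψ, sepEmb gv]) := by
      rw [orthonormal_iff_ite]
      intro i j
      fin_cases i <;> fin_cases j <;>
        simp [hIψψ, hIψg, hIgψ, hIgg, hg_norm, sep_norm_one hψ]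
    have hbes := Orthonormal.sum_inner_products_le (𝕜 := ℂ) (x := w)
      (s := (Finset.univ : Finset (Fin 2))) hpair
    rw [Fin.sum_univ_two] at hbes
    simp only [Matrix.cons_val_zero, Matrix.cons_val_one, Matrix.head_cons] at hbes
    have h1 : ‖⟪sepEmb ψ, w⟫_ℂ‖ = ρ := by
      rw [hψw, Complex.norm_real, Real.norm_of_nonneg hρpos.le]
    have hfw : f 1 = ⟪sepEmb gv, w⟫_ℂ := by
      rw [hfi 1, hgvfun, hb1]
    rw [hfw]
    have h2 : ‖⟪sepEmb gv, w⟫_ℂ‖ ^ 2 ≤ ‖m‖ ^ 2 := by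
      rw [hw1, h1] at hbes
      nlinarith [hρ2]
    calc ‖⟪sepEmb gv, w⟫_ℂ‖ = Real.sqrt (‖⟪sepEmb gv, w⟫_ℂ‖ ^ 2) :=
          (Real.sqrt_sq (norm_nonneg _)).symm
      _ ≤ Real.sqrt (‖m‖ ^ 2) := Real.sqrt_le_sqrt h2
      _ = ‖m‖ := Real.sqrt_sq (norm_nonneg m)
  -- assemble
  have h01' : (1 : Fin (e + 2)) ∈ Finset.univ.erase (0 : Fin (e + 2)) :=
    Finset.mem_erase.mpr ⟨h01.symm, Finset.mem_univ _⟩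
  have hsplit : ∑ i, ‖f i‖ =
      ‖f 0‖ +
        (‖f 1‖ + ∑ i ∈ (Finset.univ.erase 0).erase 1, ‖f i‖) := by
    rw [← Finset.add_sum_erase _ _ (Finset.mem_univ (0 : Fin (e + 2)))]
    rw [← Finset.add_sum_erase _ _ h01']
  have hcard2 : ((Finset.univ.erase (0 : Fin (e + 2))).erase 1).card = e := by
    rw [Finset.card_erase_of_mem h01', Finset.card_erase_of_mem (Finset.mem_univ _)]
    simp
  have hrest : ∑ i ∈ (Finset.univ.erase (0 : Fin (e + 2))).erase 1, ‖f i‖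
      ≤ (e : ℝ) := by
    calc ∑ i ∈ (Finset.univ.erase (0 : Fin (e + 2))).erase 1, ‖f i‖
        ≤ ∑ _i ∈ (Finset.univ.erase (0 : Fin (e + 2))).erase 1, (1 : ℝ) :=
          Finset.sum_le_sum fun i _ => habs1 i
      _ = (e : ℝ) := by rw [Finset.sum_const, hcard2]; simp
  calc ‖∑ i, f i‖
      ≤ ∑ i, ‖f i‖ := norm_sum_le _ _
    _ = ‖f 0‖ +
        (‖f 1‖ + ∑ i ∈ (Finset.univ.erase 0).erase 1, ‖f i‖) := hsplit
    _ ≤ ‖m‖ + (‖m‖ + (e : ℝ)) := by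
        rw [hf0]
        gcongr
    _ = 2 * ‖m‖ + (((e + 2 : ℕ) : ℝ) - 2) := by push_cast; ring

theorem abs_trace_upper_bound_separable {d : ℕ} (hd : 2 ≤ d)
    (U V W : Matrix (Fin d) (Fin d) ℂ)
    (hU : U ∈ Matrix.unitaryGroup (Fin d) ℂ)
    (hV : V ∈ Matrix.unitaryGroup (Fin d) ℂ)
    (hW : W ∈ Matrix.unitaryGroup (Fin d) ℂ)
    (ψ : Fin d → ℂ) (hψ : star ψ ⬝ᵥ ψ = 1)
    (fV fW : ℝ)
    (hfV : fV = ‖star ψ ⬝ᵥ (Uᴴ * V).mulVec ψ‖ ^ 2)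
    (hfW0 : 0 ≤ fW) (hfW1 : fW ≤ 1)
    (hfW : ‖star ψ ⬝ᵥ (Uᴴ * W).mulVec ψ‖ ^ 2 = fW) :
    ‖Matrix.trace (Vᴴ * W)‖ ≤
      2 * (Real.sqrt (fV * fW) + Real.sqrt ((1 - fV) * (1 - fW))) + ((d : ℝ) - 2) := by
  have hVW : Vᴴ * W ∈ Matrix.unitaryGroup (Fin d) ℂ :=
    mul_mem (Unitary.star_mem hV) hW
  have htr := sep_abs_trace_le hd (Vᴴ * W) hVW ψ hψ
  set u : EuclideanSpace ℂ (Fin d) := sepEmb (U.mulVec ψ) with hu_def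
  set x : EuclideanSpace ℂ (Fin d) := sepEmb (V.mulVec ψ) with hx_def
  set y : EuclideanSpace ℂ (Fin d) := sepEmb (W.mulVec ψ) with hy_def
  have hu : ‖u‖ = 1 := by rw [hu_def, sep_norm_mulVec hU.1]; exact sep_norm_one hψ
  have hx : ‖x‖ = 1 := by rw [hx_def, sep_norm_mulVec hV.1]; exact sep_norm_one hψ
  have hy : ‖y‖ = 1 := by rw [hy_def, sep_norm_mulVec hW.1]; exact sep_norm_one hψ
  have hbridge : ∀ P Q : Matrix (Fin d) (Fin d) ℂ,
      star ψ ⬝ᵥ (Pᴴ * Q).mulVec ψ = ⟪sepEmb (P.mulVec ψ), sepEmb (Q.mulVec ψ)⟫_ℂ := by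
    intro P Q
    rw [← Matrix.mulVec_mulVec, sep_adj_dot P ψ (Q.mulVec ψ), sepEmb_inner]
  have hmx : star ψ ⬝ᵥ (Vᴴ * W).mulVec ψ = ⟪x, y⟫_ℂ := hbridge V W
  have hux : star ψ ⬝ᵥ (Uᴴ * V).mulVec ψ = ⟪u, x⟫_ℂ := hbridge U V
  have huy : star ψ ⬝ᵥ (Uᴴ * W).mulVec ψ = ⟪u, y⟫_ℂ := hbridge U W
  set a : ℝ := ‖⟪u, x⟫_ℂ‖ with ha_def
  set bb : ℝ := ‖⟪u, y⟫_ℂ‖ with hbb_def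
  have hfVa : fV = a ^ 2 := by rw [hfV, hux, ha_def]
  have hfWb : fW = bb ^ 2 := by rw [← hfW, huy, hbb_def]
  have ha0 : 0 ≤ a := norm_nonneg _
  have hb0 : 0 ≤ bb := norm_nonneg _
  have ha1 : a ≤ 1 := by
    calc a ≤ ‖u‖ * ‖x‖ := norm_inner_le_norm _ _
      _ = 1 := by rw [hu, hx]; ring
  have hb1 : bb ≤ 1 := by
    calc bb ≤ ‖u‖ * ‖y‖ := norm_inner_le_norm _ _
      _ = 1 := by rw [hu, hy]; ring
  have hsq1 : Real.sqrt (fV * fW) = a * bb := by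
    rw [hfVa, hfWb, show a ^ 2 * bb ^ 2 = (a * bb) ^ 2 by ring,
      Real.sqrt_sq (mul_nonneg ha0 hb0)]
  have hsq2 : Real.sqrt ((1 - fV) * (1 - fW)) =
      Real.sqrt (1 - a ^ 2) * Real.sqrt (1 - bb ^ 2) := by
    rw [hfVa, hfWb, Real.sqrt_mul (by nlinarith)]
  have hkey := sep_inner_bound u x y hu hx hy
  have hmabs : ‖star ψ ⬝ᵥ (Vᴴ * W).mulVec ψ‖ ≤
      Real.sqrt (fV * fW) + Real.sqrt ((1 - fV) * (1 - fW)) := by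
    rw [hmx, hsq1, hsq2]
    exact hkey
  calc ‖Matrix.trace (Vᴴ * W)‖
      ≤ 2 * ‖star ψ ⬝ᵥ (Vᴴ * W).mulVec ψ‖ + ((d : ℝ) - 2) := htr
    _ ≤ 2 * (Real.sqrt (fV * fW) + Real.sqrt ((1 - fV) * (1 - fW))) + ((d : ℝ) - 2) := by
        gcongr
end

section
/- Let U, V be d×d unitary matrices (d ≥ 2), |ψ⟩ a unit vector, and f_V = |⟨ψ|U†V|ψ⟩|². For every f_W ∈ [0,1] there exists a unitary W with |⟨ψ|U†W|ψ⟩|² = f_W and |Tr(V†W)| = 2(√(f_V f_W) + √((1−f_V)(1−f_W))) + (d−2). -/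
open Matrix Complex

section Helpers

variable {d : ℕ}

lemma vmv_mul (x y u v : Fin d → ℂ) :
    vecMulVec x (star y) * vecMulVec u (star v) = (star y ⬝ᵥ u) • vecMulVec x (star v) := by
  ext i j
  simp [mul_apply, vecMulVec_apply, dotProduct, Finset.sum_mul, Finset.mul_sum]
  congr 1; ext k; ring

lemma vmv_conjT (x y : Fin d → ℂ) :
    (vecMulVec x (star y))ᴴ = vecMulVec y (star x) := by
  ext i j
  simp [vecMulVec_apply, conjTranspose_apply, mul_comm]

lemma trace_vmv (x y : Fin d → ℂ) :
    trace (vecMulVec x (star y)) = star y ⬝ᵥ x := by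
  simp [trace, vecMulVec_apply, dotProduct, diag, mul_comm]

lemma vmv_mulVec (x y v : Fin d → ℂ) :
    (vecMulVec x (star y)).mulVec v = (star y ⬝ᵥ v) • x := by
  ext i
  simp [mulVec, vecMulVec_apply, dotProduct, Finset.mul_sum, Finset.sum_mul]
  congr 1; ext k; ring

lemma dot_adjoint (A : Matrix (Fin d) (Fin d) ℂ) (x y : Fin d → ℂ) :
    star x ⬝ᵥ A.mulVec x = star x ⬝ᵥ A.mulVec x := rfl

lemma dot_adj (A : Matrix (Fin d) (Fin d) ℂ) (x y : Fin d → ℂ) :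
    star x ⬝ᵥ A.mulVec y = star (Aᴴ.mulVec x) ⬝ᵥ y := by
  rw [dotProduct_mulVec, star_mulVec, conjTranspose_conjTranspose]

noncomputable def rotT (C : ℝ) (s : ℂ) (ψ c : Fin d → ℂ) : Matrix (Fin d) (Fin d) ℂ :=
  1 + ((C : ℂ) - 1) • (vecMulVec ψ (star ψ) + vecMulVec c (star c))
    + s • vecMulVec c (star ψ) - (star s) • vecMulVec ψ (star c)

lemma rot_mem (ψ c : Fin d → ℂ) (h1 : star ψ ⬝ᵥ ψ = 1) (h2 : star c ⬝ᵥ c = 1)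
    (h3 : star ψ ⬝ᵥ c = 0) (h4 : star c ⬝ᵥ ψ = 0) (C : ℝ) (s : ℂ)
    (hs : s * star s = ((1:ℂ) - (C:ℂ)^2)) :
    rotT C s ψ c ∈ Matrix.unitaryGroup (Fin d) ℂ := by
  rw [Matrix.mem_unitaryGroup_iff', Matrix.star_eq_conjTranspose]
  unfold rotT
  simp only [conjTranspose_add, conjTranspose_sub, conjTranspose_smul, conjTranspose_one,
    vmv_conjT, star_sub, star_one, star_star, Complex.star_def, Complex.conj_ofReal]
  simp only [Matrix.add_mul, Matrix.mul_add, Matrix.sub_mul, Matrix.mul_sub,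
    Matrix.smul_mul, Matrix.mul_smul, Matrix.one_mul, Matrix.mul_one, vmv_mul,
    h1, h2, h3, h4, one_smul, zero_smul, smul_smul, smul_zero, smul_add, smul_sub]
  have hss : star s * s = ((1:ℂ) - (C:ℂ)^2) := by rw [mul_comm] at hs; exact hs
  simp only [Complex.star_def] at hs hss
  simp only [Complex.conj_conj]
  rw [hs, hss]
  module

lemma rot_mulVec (ψ c : Fin d → ℂ) (h1 : star ψ ⬝ᵥ ψ = 1)
    (h4 : star c ⬝ᵥ ψ = 0) (C : ℝ) (s : ℂ) :
    (rotT C s ψ c).mulVec ψ = (C:ℂ) • ψ + s • c := by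
  unfold rotT
  simp only [Matrix.add_mulVec, Matrix.sub_mulVec, Matrix.smul_mulVec,
    Matrix.one_mulVec, vmv_mulVec, h1, h4, one_smul, zero_smul, smul_zero, smul_add]
  module

lemma rot_trace (ψ c : Fin d → ℂ) (h1 : star ψ ⬝ᵥ ψ = 1) (h2 : star c ⬝ᵥ c = 1)
    (h3 : star ψ ⬝ᵥ c = 0) (h4 : star c ⬝ᵥ ψ = 0) (C : ℝ) (s : ℂ) :
    trace (rotT C s ψ c) = (d:ℂ) + 2*((C:ℂ) - 1) := by
  unfold rotT
  simp only [trace_add, trace_sub, trace_smul, trace_one, trace_vmv, h1, h2, h3, h4]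
  simp
  ring

lemma dot_self_normSq (v : Fin d → ℂ) :
    star v ⬝ᵥ v = ((∑ i, Complex.normSq (v i) : ℝ) : ℂ) := by
  push_cast
  simp [dotProduct, Complex.normSq_eq_conj_mul_self]

lemma exists_normalized' (v : Fin d → ℂ) (hv : v ≠ 0) :
    ∃ t : ℝ, 0 < t ∧ star ((t:ℂ) • v) ⬝ᵥ ((t:ℂ) • v) = 1 := by
  set N : ℝ := ∑ i, Complex.normSq (v i) with hN
  have hNpos : 0 < N := by
    obtain ⟨i, hi⟩ : ∃ i, v i ≠ 0 := by
      by_contra h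
      push_neg at h
      exact hv (funext h)
    exact Finset.sum_pos' (fun j _ => Complex.normSq_nonneg _)
      ⟨i, Finset.mem_univ i, Complex.normSq_pos.mpr hi⟩
  refine ⟨(Real.sqrt N)⁻¹, by positivity, ?_⟩
  rw [star_smul, smul_dotProduct, dotProduct_smul, dot_self_normSq, ← hN]
  have h1 : star ((Real.sqrt N)⁻¹ : ℂ) = ((Real.sqrt N)⁻¹ : ℂ) := by
    simp [Complex.star_def, Complex.conj_ofReal]
  push_cast
  rw [h1]
  rw [smul_eq_mul, smul_eq_mul, ← mul_assoc]
  have : ((Real.sqrt N : ℂ))⁻¹ * ((Real.sqrt N : ℂ))⁻¹ * (N:ℂ) = 1 := by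
    have hs : (Real.sqrt N : ℝ) * Real.sqrt N = N := Real.mul_self_sqrt hNpos.le
    have hs0 : (Real.sqrt N : ℝ) ≠ 0 := by positivity
    field_simp
    norm_cast
    rw [sq, hs]
    exact div_self hNpos.ne'
  exact_mod_cast this

lemma exists_orth (hd : 2 ≤ d) (ψ : Fin d → ℂ) (hψ : star ψ ⬝ᵥ ψ = 1) :
    ∃ c : Fin d → ℂ, star c ⬝ᵥ c = 1 ∧ star ψ ⬝ᵥ c = 0 := by
  have hne : ∃ i : Fin d, (Pi.single i (1:ℂ) - (star ψ ⬝ᵥ Pi.single i 1) • ψ) ≠ 0 := by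
    by_contra h
    push_neg at h
    set i0 : Fin d := ⟨0, by omega⟩ with hi0
    set i1 : Fin d := ⟨1, by omega⟩ with hi1
    have hne01 : i1 ≠ i0 := by simp [hi0, hi1, Fin.ext_iff]
    have h0 := sub_eq_zero.mp (h i0)
    have h1 := sub_eq_zero.mp (h i1)
    have e00 : (1:ℂ) = (star ψ ⬝ᵥ Pi.single i0 1) * ψ i0 := by
      have := congrFun h0 i0; simpa [Pi.single_eq_same] using this
    have e01 : (0:ℂ) = (star ψ ⬝ᵥ Pi.single i0 1) * ψ i1 := by
      have := congrFun h0 i1; simpa [Pi.single_eq_of_ne hne01] using this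
    have e11 : (1:ℂ) = (star ψ ⬝ᵥ Pi.single i1 1) * ψ i1 := by
      have := congrFun h1 i1; simpa [Pi.single_eq_same] using this
    have ha0 : (star ψ ⬝ᵥ Pi.single i0 1) ≠ 0 := by
      intro hz; rw [hz, zero_mul] at e00; exact one_ne_zero e00
    have hψ1 : ψ i1 = 0 := by
      rcases mul_eq_zero.mp e01.symm with h' | h'
      · exact absurd h' ha0
      · exact h'
    rw [hψ1, mul_zero] at e11
    exact one_ne_zero e11
  obtain ⟨i, hi⟩ := hne
  set r := Pi.single i (1:ℂ) - (star ψ ⬝ᵥ Pi.single i 1) • ψ with hr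
  have horth : star ψ ⬝ᵥ r = 0 := by
    rw [hr, dotProduct_sub, dotProduct_smul, hψ, smul_eq_mul, mul_one, sub_self]
  obtain ⟨t, ht, hnorm⟩ := exists_normalized' r hi
  exact ⟨(t:ℂ) • r, hnorm, by rw [dotProduct_smul, horth, smul_zero]⟩

end Helpers

theorem exists_unitary_attaining_trace_bound {d : ℕ} (hd : 2 ≤ d)
    (U V : Matrix (Fin d) (Fin d) ℂ)
    (hU : U ∈ Matrix.unitaryGroup (Fin d) ℂ)
    (hV : V ∈ Matrix.unitaryGroup (Fin d) ℂ)
    (ψ : Fin d → ℂ) (hψ : star ψ ⬝ᵥ ψ = 1)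
    (fV : ℝ) (hfV : fV = ‖star ψ ⬝ᵥ (Uᴴ * V).mulVec ψ‖ ^ 2)
    (fW : ℝ) (hfW0 : 0 ≤ fW) (hfW1 : fW ≤ 1) :
    ∃ W : Matrix (Fin d) (Fin d) ℂ,
      W ∈ Matrix.unitaryGroup (Fin d) ℂ ∧
      ‖star ψ ⬝ᵥ (Uᴴ * W).mulVec ψ‖ ^ 2 = fW ∧
      ‖Matrix.trace (Vᴴ * W)‖ =
        2 * (Real.sqrt (fV * fW) + Real.sqrt ((1 - fV) * (1 - fW))) + ((d : ℝ) - 2) := by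
  have hUU : Uᴴ * U = 1 := by
    have := Matrix.mem_unitaryGroup_iff'.mp hU
    rwa [Matrix.star_eq_conjTranspose] at this
  have hVV : V * Vᴴ = 1 := by
    have := Matrix.mem_unitaryGroup_iff.mp hV
    rwa [Matrix.star_eq_conjTranspose] at this
  have hVV' : Vᴴ * V = 1 := by
    have := Matrix.mem_unitaryGroup_iff'.mp hV
    rwa [Matrix.star_eq_conjTranspose] at this
  set g := star ψ ⬝ᵥ (Uᴴ * V).mulVec ψ with hg
  set u := (Vᴴ * U).mulVec ψ with hu
  set z := starRingEnd ℂ g with hzdef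
  -- z = ⟨ψ, u⟩
  have hz : star ψ ⬝ᵥ u = z := by
    rw [hu]
    have h1 : Vᴴ * U = (Uᴴ * V)ᴴ := by
      rw [conjTranspose_mul, conjTranspose_conjTranspose]
    rw [h1, dot_adj, conjTranspose_conjTranspose, star_dotProduct]
    rfl
  -- u is a unit vector
  have hM1 : (Uᴴ * V) * (Vᴴ * U) = 1 := by
    rw [Matrix.mul_assoc, ← Matrix.mul_assoc V, hVV, Matrix.one_mul, hUU]
  have huu : star u ⬝ᵥ u = 1 := by
    have h2 := dot_adj ((Vᴴ*U)ᴴ) ψ ((Vᴴ*U).mulVec ψ)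
    rw [conjTranspose_conjTranspose] at h2
    rw [hu, ← h2, mulVec_mulVec]
    have h3 : (Vᴴ*U)ᴴ = Uᴴ * V := by
      rw [conjTranspose_mul, conjTranspose_conjTranspose]
    rw [h3, hM1, Matrix.one_mulVec, hψ]
  -- decomposition u = z • ψ + w • c with c unit, orthogonal to ψ
  obtain ⟨c, w, hcc, hψc, hdecomp⟩ :
      ∃ (c : Fin d → ℂ) (w : ℂ), star c ⬝ᵥ c = 1 ∧ star ψ ⬝ᵥ c = 0 ∧
        u = z • ψ + w • c := by
    by_cases hr : u - z • ψ = 0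
    · obtain ⟨c, hcc, hψc⟩ := exists_orth hd ψ hψ
      exact ⟨c, 0, hcc, hψc, by rw [zero_smul, add_zero, ← sub_eq_zero]; exact hr⟩
    · obtain ⟨t, ht, htn⟩ := exists_normalized' (u - z • ψ) hr
      refine ⟨(t:ℂ) • (u - z • ψ), ((t:ℝ)⁻¹ : ℂ), htn, ?_, ?_⟩
      · rw [dotProduct_smul]
        have : star ψ ⬝ᵥ (u - z • ψ) = 0 := by
          rw [dotProduct_sub, dotProduct_smul, hψ, hz, smul_eq_mul, mul_one, sub_self]
        rw [this, smul_zero]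
      · rw [smul_smul]
        have ht0 : (t:ℂ) ≠ 0 := by exact_mod_cast ht.ne'
        rw [← Complex.ofReal_inv]
        have : ((t⁻¹ : ℝ) : ℂ) * (t:ℂ) = 1 := by
          rw [← Complex.ofReal_mul, inv_mul_cancel₀ ht.ne']
          norm_num
        rw [this, one_smul, add_sub_cancel]
  have h4 : star c ⬝ᵥ ψ = 0 := by
    rw [star_dotProduct, hψc, star_zero]
  have hcu : star c ⬝ᵥ u = w := by
    rw [hdecomp, dotProduct_add, dotProduct_smul, dotProduct_smul, h4, hcc,
      smul_zero, smul_eq_mul, mul_one, zero_add]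
  -- norm identity
  have hnorm : Complex.normSq z + Complex.normSq w = 1 := by
    have h5 : star u ⬝ᵥ u = (starRingEnd ℂ z) * z + (starRingEnd ℂ w) * w := by
      rw [hdecomp]
      simp only [star_add, star_smul, add_dotProduct, dotProduct_add,
        smul_dotProduct, dotProduct_smul, hψ, hcc, hψc, h4, Complex.star_def,
        smul_eq_mul]
      ring
    rw [huu] at h5
    have h6 : ((Complex.normSq z + Complex.normSq w : ℝ) : ℂ) = 1 := by
      push_cast
      rw [← Complex.normSq_eq_conj_mul_self, ← Complex.normSq_eq_conj_mul_self] at h5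
      exact_mod_cast h5.symm
    exact_mod_cast h6
  set a : ℝ := ‖z‖ with ha
  set a' : ℝ := ‖w‖ with ha'
  have haa : a^2 + a'^2 = 1 := by
    rw [ha, ha', Complex.sq_norm, Complex.sq_norm]; exact hnorm
  have hfVa : fV = a^2 := by
    rw [hfV, ha, hzdef, Complex.norm_conj]
  set b : ℝ := Real.sqrt fW with hb
  set b' : ℝ := Real.sqrt (1 - fW) with hb'
  have hb2 : b^2 = fW := Real.sq_sqrt hfW0
  have hb'2 : b'^2 = 1 - fW := Real.sq_sqrt (by linarith)
  have hbnn : 0 ≤ b := Real.sqrt_nonneg _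
  have hb'nn : 0 ≤ b' := Real.sqrt_nonneg _
  have hann : 0 ≤ a := norm_nonneg _
  have ha'nn : 0 ≤ a' := norm_nonneg _
  set C : ℝ := a*b + a'*b' with hC
  set S : ℝ := a'*b - a*b' with hS
  have hCS : C^2 + S^2 = 1 := by
    have : C^2 + S^2 = (a^2+a'^2)*(b^2+b'^2) := by rw [hC, hS]; ring
    rw [this, haa, hb2, hb'2]; ring
  have hCaSa : C*a + S*a' = b := by
    have : C*a + S*a' = b*(a^2+a'^2) := by rw [hC, hS]; ring
    rw [this, haa, mul_one]
  -- phases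
  set p : ℂ := if z = 0 then 1 else z / (a:ℂ) with hp
  set q : ℂ := if w = 0 then 1 else w / (a':ℂ) with hq
  have hzp : z = (a:ℂ) * p := by
    rw [hp]
    by_cases h0 : z = 0
    · simp [h0, ha]
    · have ha0 : (a:ℂ) ≠ 0 := by
        simp only [ha, ne_eq, Complex.ofReal_eq_zero]
        exact norm_ne_zero_iff.mpr h0
      rw [if_neg h0]
      field_simp
  have hwq : w = (a':ℂ) * q := by
    rw [hq]
    by_cases h0 : w = 0
    · simp [h0, ha']
    · have ha0 : (a':ℂ) ≠ 0 := by
        simp only [ha', ne_eq, Complex.ofReal_eq_zero]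
        exact norm_ne_zero_iff.mpr h0
      rw [if_neg h0]
      field_simp
  have hppc : p * starRingEnd ℂ p = 1 := by
    rw [hp]
    by_cases h0 : z = 0
    · simp [h0]
    · rw [if_neg h0, Complex.mul_conj]
      have : Complex.normSq (z / (a:ℂ)) = 1 := by
        rw [map_div₀, Complex.normSq_ofReal, ha, ← Complex.sq_norm, sq]
        exact div_self (mul_ne_zero (norm_ne_zero_iff.mpr h0) (norm_ne_zero_iff.mpr h0))
      rw [this]; norm_num
  have hqqc : q * starRingEnd ℂ q = 1 := by
    rw [hq]
    by_cases h0 : w = 0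
    · simp [h0]
    · rw [if_neg h0, Complex.mul_conj]
      have : Complex.normSq (w / (a':ℂ)) = 1 := by
        rw [map_div₀, Complex.normSq_ofReal, ha', ← Complex.sq_norm, sq]
        exact div_self (mul_ne_zero (norm_ne_zero_iff.mpr h0) (norm_ne_zero_iff.mpr h0))
      rw [this]; norm_num
  set s : ℂ := (S:ℂ) * q * starRingEnd ℂ p with hs
  have hsbar : star s = (S:ℂ) * starRingEnd ℂ q * p := by
    rw [hs, Complex.star_def, _root_.map_mul, _root_.map_mul, Complex.conj_ofReal, Complex.conj_conj]
  have hss : s * star s = (1:ℂ) - (C:ℂ)^2 := by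
    have h7 : s * star s = ((S:ℂ))^2 * (q * starRingEnd ℂ q) * (p * starRingEnd ℂ p) := by
      rw [hsbar, hs]; ring
    rw [h7, hppc, hqqc, mul_one, mul_one]
    have : (S:ℝ)^2 = 1 - C^2 := by linarith
    push_cast [← this]
    norm_cast
  -- the witness
  refine ⟨V * rotT C s ψ c, ?_, ?_, ?_⟩
  · exact Submonoid.mul_mem _ hV (rot_mem ψ c hψ hcc hψc h4 C s hss)
  · -- overlap condition
    have hval : star ψ ⬝ᵥ (Uᴴ * (V * rotT C s ψ c)).mulVec ψ
        = starRingEnd ℂ p * ((b : ℝ) : ℂ) := by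
      rw [← Matrix.mul_assoc, ← mulVec_mulVec, dot_adj]
      have h3 : (Uᴴ*V)ᴴ = Vᴴ * U := by
        rw [conjTranspose_mul, conjTranspose_conjTranspose]
      rw [h3, ← hu, rot_mulVec ψ c hψ h4 C s, dotProduct_add, dotProduct_smul,
        dotProduct_smul]
      have huψ : star u ⬝ᵥ ψ = starRingEnd ℂ z := by
        rw [star_dotProduct, hz]; rfl
      have huc : star u ⬝ᵥ c = starRingEnd ℂ w := by
        rw [star_dotProduct, hcu]; rfl
      rw [huψ, huc, smul_eq_mul, smul_eq_mul]
      have hcz : starRingEnd ℂ z = (a:ℂ) * starRingEnd ℂ p := by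
        rw [hzp, _root_.map_mul, Complex.conj_ofReal]
      have hcw : starRingEnd ℂ w = (a':ℂ) * starRingEnd ℂ q := by
        rw [hwq, _root_.map_mul, Complex.conj_ofReal]
      rw [hcz, hcw, hs, ← hCaSa]
      push_cast
      linear_combination ((S:ℂ) * (a':ℂ) * starRingEnd ℂ p) * hqqc
    rw [hval, norm_mul]
    have habs_p : ‖starRingEnd ℂ p‖ = 1 := by
      have h8 : Complex.normSq p = 1 := by
        have := hppc
        rw [Complex.mul_conj] at this
        exact_mod_cast this
      rw [Complex.norm_conj, ← Real.sqrt_one, Complex.norm_def, h8]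
    rw [habs_p, one_mul, Complex.norm_real, Real.norm_eq_abs, _root_.abs_of_nonneg hbnn, hb2]
  · -- trace condition
    rw [← Matrix.mul_assoc, hVV', Matrix.one_mul,
      rot_trace ψ c hψ hcc hψc h4 C s]
    have h9 : (d:ℂ) + 2*((C:ℂ) - 1) = (((d:ℝ) - 2 + 2*C : ℝ) : ℂ) := by
      push_cast; ring
    have hCnn : 0 ≤ C := by positivity
    have hd2 : (0:ℝ) ≤ (d:ℝ) - 2 := by
      have : (2:ℝ) ≤ (d:ℝ) := by exact_mod_cast hd
      linarith
    rw [h9, Complex.norm_real, Real.norm_eq_abs, _root_.abs_of_nonneg (by linarith)]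
    have hsq1 : Real.sqrt (fV * fW) = a * b := by
      have : fV * fW = (a*b)^2 := by rw [hfVa, ← hb2]; ring
      rw [this, Real.sqrt_sq (by positivity)]
    have hsq2 : Real.sqrt ((1 - fV) * (1 - fW)) = a' * b' := by
      have h1fV : 1 - fV = a'^2 := by rw [hfVa]; linarith
      have : (1 - fV) * (1 - fW) = (a'*b')^2 := by rw [h1fV, ← hb'2]; ring
      rw [this, Real.sqrt_sq (by positivity)]
    rw [hsq1, hsq2, hC]
    ring
end

section
/- Let U, V be d×d unitary matrices and set f_V = |Tr(U†V)|²/d², f_W ∈ [0,1]. Then for every unitary W with |Tr(U†W)|²/d² = f_W, the absolute trace satisfies |Tr(V†W)| ≤ d√(f_V f_W) + d√((1−f_V)(1−f_W)). Consequently the phase-corrected Frobenius distance satisfies min_ρ ‖V − e^{iρ}W‖_F ≥ √(2d(1 − √(f_V f_W) − √((1−f_V)(1−f_W)))). -/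
open Matrix Complex
open scoped InnerProductSpace

noncomputable def frobNorm {d : ℕ} (X : Matrix (Fin d) (Fin d) ℂ) : ℝ :=
  Real.sqrt ((Matrix.trace (Xᴴ * X)).re)

lemma conj_mul_self' (α : ℂ) : (starRingEnd ℂ) α * α = (‖α‖ : ℂ) ^ 2 := by
  rw [Complex.conj_mul']

noncomputable def emb {d : ℕ} (X : Matrix (Fin d) (Fin d) ℂ) :
    EuclideanSpace ℂ (Fin d × Fin d) := WithLp.toLp 2 (fun p : Fin d × Fin d => X p.1 p.2)

lemma inner_emb {d : ℕ} (X Y : Matrix (Fin d) (Fin d) ℂ) :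
    ⟪emb X, emb Y⟫_ℂ = Matrix.trace (Xᴴ * Y) := by
  rw [PiLp.inner_apply]
  rw [Matrix.trace]
  simp [Matrix.diag, Matrix.mul_apply, emb, Fintype.sum_prod_type, mul_comm]
  rw [Finset.sum_comm]

lemma emb_sub_smul {d : ℕ} (X Y : Matrix (Fin d) (Fin d) ℂ) (c : ℂ) :
    emb (X - c • Y) = emb X - c • emb Y := rfl

lemma frob_emb {d : ℕ} (X : Matrix (Fin d) (Fin d) ℂ) : frobNorm X = ‖emb X‖ := by
  rw [@norm_eq_sqrt_re_inner ℂ, inner_emb, frobNorm]; rfl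

lemma inner_unitary {d : ℕ} (U : Matrix (Fin d) (Fin d) ℂ)
    (hU : U ∈ Matrix.unitaryGroup (Fin d) ℂ) : ⟪emb U, emb U⟫_ℂ = ((d : ℝ) : ℂ) := by
  rw [inner_emb]
  have h : Uᴴ * U = 1 := by simpa [Matrix.star_eq_conjTranspose] using hU.1
  rw [h, Matrix.trace_one]
  simp

lemma inner_tri {E : Type*} [NormedAddCommGroup E] [InnerProductSpace ℂ E]
    (u v w : E) (r : ℝ) (hr : 0 < r)
    (hu : ⟪u, u⟫_ℂ = (r : ℂ)) (hv : ⟪v, v⟫_ℂ = (r : ℂ)) (hw : ⟪w, w⟫_ℂ = (r : ℂ)) :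
    ‖⟪v, w⟫_ℂ‖ ≤ ‖⟪u, v⟫_ℂ‖ * ‖⟪u, w⟫_ℂ‖ / r
      + Real.sqrt (r - ‖⟪u, v⟫_ℂ‖ ^ 2 / r) * Real.sqrt (r - ‖⟪u, w⟫_ℂ‖ ^ 2 / r) := by
  set α := ⟪u, v⟫_ℂ with hα
  set β := ⟪u, w⟫_ℂ with hβ
  set v' := v - (α / r) • u with hv'def
  set w' := w - (β / r) • u with hw'def
  have hrC : (r : ℂ) ≠ 0 := by exact_mod_cast hr.ne'
  have huv' : ⟪u, v'⟫_ℂ = 0 := by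
    rw [hv'def, inner_sub_right, inner_smul_right, hu]
    field_simp
    rw [hα, sub_self]
  have huw' : ⟪u, w'⟫_ℂ = 0 := by
    rw [hw'def, inner_sub_right, inner_smul_right, hu]
    field_simp
    rw [hβ, sub_self]
  have hv'u : ⟪v', u⟫_ℂ = 0 := by
    rw [← inner_conj_symm, huv', map_zero]
  have hw'u : ⟪w', u⟫_ℂ = 0 := by
    rw [← inner_conj_symm, huw', map_zero]
  have hvu : ⟪v, u⟫_ℂ = (starRingEnd ℂ) α := by rw [hα, inner_conj_symm]
  have hwu : ⟪w, u⟫_ℂ = (starRingEnd ℂ) β := by rw [hβ, inner_conj_symm]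
  have hnv' : ‖v'‖ ^ 2 = r - ‖α‖ ^ 2 / r := by
    have h1 : ((‖v'‖ ^ 2 : ℝ) : ℂ) = ((r - ‖α‖ ^ 2 / r : ℝ) : ℂ) := by
      push_cast
      rw [show ((‖v'‖ : ℂ) ^ 2) = ⟪v', v'⟫_ℂ from (inner_self_eq_norm_sq_to_K v').symm]
      simp only [hv'def, inner_sub_left, inner_sub_right, inner_smul_left, inner_smul_right,
        hu, hv, hvu, ← hα]
      field_simp
      linear_combination (-1 : ℂ) * conj_mul_self' α
    exact_mod_cast h1
  have hnw' : ‖w'‖ ^ 2 = r - ‖β‖ ^ 2 / r := by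
    have h1 : ((‖w'‖ ^ 2 : ℝ) : ℂ) = ((r - ‖β‖ ^ 2 / r : ℝ) : ℂ) := by
      push_cast
      rw [show ((‖w'‖ : ℂ) ^ 2) = ⟪w', w'⟫_ℂ from (inner_self_eq_norm_sq_to_K w').symm]
      simp only [hw'def, inner_sub_left, inner_sub_right, inner_smul_left, inner_smul_right,
        hu, hw, hwu, ← hβ]
      field_simp
      linear_combination (-1 : ℂ) * conj_mul_self' β
    exact_mod_cast h1
  have hdec : ⟪v, w⟫_ℂ = (starRingEnd ℂ) α * β / r + ⟪v', w'⟫_ℂ := by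
    have hvv : v = (α / r) • u + v' := by rw [hv'def]; abel
    have hww : w = (β / r) • u + w' := by rw [hw'def]; abel
    conv_lhs => rw [hvv, hww]
    simp only [inner_add_left, inner_add_right, inner_smul_left, inner_smul_right,
      hu, huw', hv'u]
    simp only [map_div₀, Complex.conj_ofReal]
    field_simp
    ring
  calc ‖⟪v, w⟫_ℂ‖ ≤ ‖(starRingEnd ℂ) α * β / r‖ + ‖⟪v', w'⟫_ℂ‖ := by
        rw [hdec]; exact norm_add_le _ _
    _ ≤ ‖α‖ * ‖β‖ / r + Real.sqrt (r - ‖α‖ ^ 2 / r) * Real.sqrt (r - ‖β‖ ^ 2 / r) := by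
        gcongr
        · rw [norm_div, norm_mul, RCLike.norm_conj]
          simp [abs_of_pos hr]
        · calc ‖⟪v', w'⟫_ℂ‖ ≤ ‖v'‖ * ‖w'‖ := norm_inner_le_norm _ _
            _ = Real.sqrt (r - ‖α‖ ^ 2 / r) * Real.sqrt (r - ‖β‖ ^ 2 / r) := by
                rw [← hnv', ← hnw', Real.sqrt_sq (norm_nonneg _), Real.sqrt_sq (norm_nonneg _)]

set_option maxHeartbeats 1000000 in
theorem trace_bound_max_entangled {d : ℕ} (hd : 0 < d)
    (U V W : Matrix (Fin d) (Fin d) ℂ)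
    (hU : U ∈ Matrix.unitaryGroup (Fin d) ℂ)
    (hV : V ∈ Matrix.unitaryGroup (Fin d) ℂ)
    (hW : W ∈ Matrix.unitaryGroup (Fin d) ℂ)
    (fV fW : ℝ)
    (hfV : fV = ‖Matrix.trace (Uᴴ * V)‖ ^ 2 / (d : ℝ) ^ 2)
    (hfW0 : 0 ≤ fW) (hfW1 : fW ≤ 1)
    (hfW : ‖Matrix.trace (Uᴴ * W)‖ ^ 2 / (d : ℝ) ^ 2 = fW) :
    ‖Matrix.trace (Vᴴ * W)‖ ≤
        (d : ℝ) * Real.sqrt (fV * fW) + (d : ℝ) * Real.sqrt ((1 - fV) * (1 - fW))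
    ∧ ∀ ρ : ℝ, frobNorm (V - Complex.exp (ρ * Complex.I) • W) ≥
        Real.sqrt (2 * d * (1 - Real.sqrt (fV * fW) - Real.sqrt ((1 - fV) * (1 - fW)))) := by
  have hdR : (0:ℝ) < (d:ℝ) := by exact_mod_cast hd
  set u := emb U; set v := emb V; set w := emb W
  have hu : ⟪u, u⟫_ℂ = ((d:ℝ) : ℂ) := inner_unitary U hU
  have hv : ⟪v, v⟫_ℂ = ((d:ℝ) : ℂ) := inner_unitary V hV
  have hw : ⟪w, w⟫_ℂ = ((d:ℝ) : ℂ) := inner_unitary W hW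
  set a := ‖⟪u, v⟫_ℂ‖ with ha
  set b := ‖⟪u, w⟫_ℂ‖ with hb
  have ha0 : 0 ≤ a := norm_nonneg _
  have hb0 : 0 ≤ b := norm_nonneg _
  have hnormu : ‖u‖ = Real.sqrt d := by
    rw [@norm_eq_sqrt_re_inner ℂ, hu]; simp
  have hnormv : ‖v‖ = Real.sqrt d := by
    rw [@norm_eq_sqrt_re_inner ℂ, hv]; simp
  have hnormw : ‖w‖ = Real.sqrt d := by
    rw [@norm_eq_sqrt_re_inner ℂ, hw]; simp
  have had : a ≤ d := by
    calc a ≤ ‖u‖ * ‖v‖ := norm_inner_le_norm _ _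
      _ = d := by rw [hnormu, hnormv, Real.mul_self_sqrt hdR.le]
  have hbd : b ≤ d := by
    calc b ≤ ‖u‖ * ‖w‖ := norm_inner_le_norm _ _
      _ = d := by rw [hnormu, hnormw, Real.mul_self_sqrt hdR.le]
  -- rewrite abs as norms
  have haV : ‖Matrix.trace (Uᴴ * V)‖ = a := by
    rw [ha, inner_emb]
  have haW : ‖Matrix.trace (Uᴴ * W)‖ = b := by
    rw [hb, inner_emb]
  have hfV' : fV = a ^ 2 / (d:ℝ) ^ 2 := by rw [hfV, haV]
  have hfW' : fW = b ^ 2 / (d:ℝ) ^ 2 := by rw [← hfW, haW]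
  -- key identities
  have hsq1 : Real.sqrt (fV * fW) = a * b / (d:ℝ)^2 := by
    rw [hfV', hfW']
    rw [show a ^ 2 / (d:ℝ) ^ 2 * (b ^ 2 / (d:ℝ) ^ 2) = (a * b / (d:ℝ)^2)^2 by ring]
    exact Real.sqrt_sq (by positivity)
  have h1fV : 1 - fV = ((d:ℝ) - a^2/(d:ℝ)) / d := by
    rw [hfV']; field_simp
  have h1fW : 1 - fW = ((d:ℝ) - b^2/(d:ℝ)) / d := by
    rw [hfW']; field_simp
  have hA0 : 0 ≤ (d:ℝ) - a^2/(d:ℝ) := by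
    rw [sub_nonneg, div_le_iff₀ hdR]
    nlinarith
  have hB0 : 0 ≤ (d:ℝ) - b^2/(d:ℝ) := by
    rw [sub_nonneg, div_le_iff₀ hdR]
    nlinarith
  have hsq2 : (d:ℝ) * Real.sqrt ((1 - fV) * (1 - fW))
      = Real.sqrt ((d:ℝ) - a^2/(d:ℝ)) * Real.sqrt ((d:ℝ) - b^2/(d:ℝ)) := by
    rw [h1fV, h1fW, ← Real.sqrt_mul (by positivity)]
    rw [show ((d:ℝ) - a^2/(d:ℝ)) / d * ((((d:ℝ) - b^2/(d:ℝ))) / d)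
        = (((d:ℝ) - a^2/(d:ℝ)) * ((d:ℝ) - b^2/(d:ℝ))) / (d:ℝ)^2 by ring]
    rw [Real.sqrt_div (mul_nonneg hA0 hB0), Real.sqrt_sq hdR.le, Real.sqrt_mul hA0]
    field_simp
  have habs : ‖Matrix.trace (Vᴴ * W)‖ = ‖⟪v, w⟫_ℂ‖ := by
    rw [inner_emb]
  have key := inner_tri u v w (d:ℝ) hdR hu hv hw
  have part1 : ‖Matrix.trace (Vᴴ * W)‖ ≤
      (d : ℝ) * Real.sqrt (fV * fW) + (d : ℝ) * Real.sqrt ((1 - fV) * (1 - fW)) := by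
    rw [habs, hsq1, hsq2]
    calc ‖⟪v, w⟫_ℂ‖ ≤ a * b / (d:ℝ)
          + Real.sqrt ((d:ℝ) - a^2/(d:ℝ)) * Real.sqrt ((d:ℝ) - b^2/(d:ℝ)) := key
      _ = (d:ℝ) * (a * b / (d:ℝ)^2)
          + Real.sqrt ((d:ℝ) - a^2/(d:ℝ)) * Real.sqrt ((d:ℝ) - b^2/(d:ℝ)) := by
          field_simp
  refine ⟨part1, fun ρ => ?_⟩
  set c := Complex.exp (ρ * Complex.I) with hc
  have hcn : ‖c‖ = 1 := by
    rw [hc, Complex.norm_exp]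
    simp
  set T := ⟪v, w⟫_ℂ with hT
  have hfrob : frobNorm (V - c • W) = ‖v - c • w‖ := by
    rw [frob_emb, emb_sub_smul]
  have hvsq : ‖v‖ ^ 2 = (d:ℝ) := by
    rw [hnormv, Real.sq_sqrt hdR.le]
  have hwsq : ‖c • w‖ ^ 2 = (d:ℝ) := by
    rw [norm_smul, hcn, one_mul, hnormw, Real.sq_sqrt hdR.le]
  have hn2 : ‖v - c • w‖ ^ 2 = 2 * (d:ℝ) - 2 * (c * T).re := by
    rw [@norm_sub_sq ℂ, hvsq, hwsq, inner_smul_right]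
    push_cast
    ring_nf
    rfl
  have hretc : (c * T).re ≤ ‖T‖ := by
    calc (c * T).re ≤ ‖c * T‖ := Complex.re_le_norm _
      _ = ‖c‖ * ‖T‖ := by rw [norm_mul]
      _ = ‖T‖ := by rw [hcn, one_mul]
  have hTle : ‖T‖ ≤ (d : ℝ) * Real.sqrt (fV * fW) + (d : ℝ) * Real.sqrt ((1 - fV) * (1 - fW)) := by
    rw [← habs]; exact part1
  have hlow : 2 * (d:ℝ) * (1 - Real.sqrt (fV * fW) - Real.sqrt ((1 - fV) * (1 - fW)))
      ≤ ‖v - c • w‖ ^ 2 := by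
    rw [hn2]
    linarith [hretc, hTle]
  rw [hfrob, ge_iff_le]
  calc Real.sqrt (2 * d * (1 - Real.sqrt (fV * fW) - Real.sqrt ((1 - fV) * (1 - fW))))
      ≤ Real.sqrt (‖v - c • w‖ ^ 2) := Real.sqrt_le_sqrt hlow
    _ = ‖v - c • w‖ := Real.sqrt_sq (norm_nonneg _)
end

section
/- For any d×d unitary matrix M and any index k, the sum of absolute values of the diagonal entries satisfies Σ_{j=1}^d |M_{jj}| − 2|M_{kk}| ≤ d − 2. -/
open Matrix Complex Finset

private lemma colsum {d : ℕ} {V : Matrix (Fin d) (Fin d) ℂ}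
    (h : Vᴴ * V = 1) (j : Fin d) : ∑ i, Complex.normSq (V i j) = 1 := by
  have h2 : (Vᴴ * V) j j = (1 : Matrix (Fin d) (Fin d) ℂ) j j := by rw [h]
  rw [Matrix.mul_apply, Matrix.one_apply_eq] at h2
  have h3 : ∑ i, ((Complex.normSq (V i j) : ℂ)) = 1 := by
    rw [← h2]
    refine Finset.sum_congr rfl fun i _ => ?_
    rw [Matrix.conjTranspose_apply, Complex.star_def, Complex.normSq_eq_conj_mul_self]
  exact_mod_cast h3

private lemma rowsum {d : ℕ} {V : Matrix (Fin d) (Fin d) ℂ}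
    (h : V * Vᴴ = 1) (i : Fin d) : ∑ j, Complex.normSq (V i j) = 1 := by
  have h2 : (V * Vᴴ) i i = (1 : Matrix (Fin d) (Fin d) ℂ) i i := by rw [h]
  rw [Matrix.mul_apply, Matrix.one_apply_eq] at h2
  have h3 : ∑ j, ((Complex.normSq (V i j) : ℂ)) = 1 := by
    rw [← h2]
    refine Finset.sum_congr rfl fun j _ => ?_
    rw [Matrix.conjTranspose_apply, Complex.star_def, ← Complex.mul_conj]
  exact_mod_cast h3

private lemma iso {d : ℕ} {V : Matrix (Fin d) (Fin d) ℂ} (h : Vᴴ * V = 1)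
    (x y : Fin d → ℂ) : star (V *ᵥ x) ⬝ᵥ (V *ᵥ y) = star x ⬝ᵥ y := by
  rw [Matrix.star_mulVec, ← Matrix.dotProduct_mulVec, Matrix.mulVec_mulVec, h,
    Matrix.one_mulVec]

private lemma dotself {d : ℕ} (x : Fin d → ℂ) :
    star x ⬝ᵥ x = ((∑ i, Complex.normSq (x i) : ℝ) : ℂ) := by
  push_cast
  refine Finset.sum_congr rfl fun i _ => ?_
  rw [Pi.star_apply, Complex.star_def, ← Complex.normSq_eq_conj_mul_self]

private lemma key {d : ℕ} (V : Matrix (Fin d) (Fin d) ℂ)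
    (h1 : Vᴴ * V = 1) (h2 : V * Vᴴ = 1) (k : Fin d) (a : ℝ)
    (ha0 : 0 ≤ a) (hVkk : V k k = -(a : ℂ)) :
    ∑ j, (V j j).re ≤ (d : ℝ) - 2 := by
  have hd1 : (1 : ℝ) ≤ d := by exact_mod_cast k.pos
  -- normSq V k k = a^2
  have hnkk : Complex.normSq (V k k) = a ^ 2 := by
    rw [hVkk]; simp [Complex.normSq_apply]; ring
  -- every entry has normSq ≤ 1
  have hentry : ∀ i j, Complex.normSq (V i j) ≤ 1 := by
    intro i j
    calc Complex.normSq (V i j) ≤ ∑ i', Complex.normSq (V i' j) :=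
          Finset.single_le_sum (f := fun i' => Complex.normSq (V i' j))
            (fun i' _ => Complex.normSq_nonneg _) (Finset.mem_univ i)
      _ = 1 := colsum h1 j
  have hre1 : ∀ i j, (V i j).re ≤ 1 := by
    intro i j
    have := Complex.abs_re_le_norm (V i j)
    have habs : ‖V i j‖ ≤ 1 := by
      rw [← Real.sqrt_one]
      rw [Complex.norm_def]
      exact Real.sqrt_le_sqrt (hentry i j)
    calc (V i j).re ≤ |(V i j).re| := le_abs_self _
      _ ≤ ‖V i j‖ := this
      _ ≤ 1 := habs
  have ha1 : a ≤ 1 := by nlinarith [hentry k k, hnkk]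
  by_cases hlt : a < 1
  · -- main case
    set c : ℝ := 1 - a ^ 2 with hc
    have hcpos : 0 < c := by nlinarith
    classical
    set w : Fin d → ℂ := fun j => if j = k then 0 else V j k with hw
    -- sum of normSq of w
    have hwsum : ∑ j, Complex.normSq (w j) = c := by
      have := Finset.sum_erase_add Finset.univ (fun j => Complex.normSq (w j)) (Finset.mem_univ k)
      have hterm : Complex.normSq (w k) = 0 := by simp [hw]
      have hE : ∑ j ∈ Finset.univ.erase k, Complex.normSq (w j)
          = ∑ j ∈ Finset.univ.erase k, Complex.normSq (V j k) := by
        refine Finset.sum_congr rfl fun j hj => ?_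
        rw [hw]; simp [Finset.ne_of_mem_erase hj]
      have hVE : ∑ j ∈ Finset.univ.erase k, Complex.normSq (V j k) + Complex.normSq (V k k)
          = ∑ j, Complex.normSq (V j k) :=
        Finset.sum_erase_add Finset.univ _ (Finset.mem_univ k)
      rw [colsum h1 k] at hVE
      calc ∑ j, Complex.normSq (w j)
          = ∑ j ∈ Finset.univ.erase k, Complex.normSq (w j) + Complex.normSq (w k) :=
            (Finset.sum_erase_add Finset.univ _ (Finset.mem_univ k)).symm
        _ = ∑ j ∈ Finset.univ.erase k, Complex.normSq (V j k) := by rw [hterm, hE, add_zero]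
        _ = c := by rw [hc, hnkk] at *; linarith
    -- w = V e_k + a e_k
    set ek : Fin d → ℂ := Pi.single k 1 with hek
    have hVek : V *ᵥ ek = fun j => V j k := by
      funext j
      simp [Matrix.mulVec, dotProduct, hek, Pi.single_apply]
    have hwek : w = V *ᵥ ek + (a : ℂ) • ek := by
      funext j
      by_cases hj : j = k
      · subst hj
        simp [hw, hVek, hek, hVkk]
      · simp [hw, hVek, hek, hj, Pi.single_eq_of_ne hj]
    -- p = <w, Vw>
    set p : ℂ := star w ⬝ᵥ (V *ᵥ w) with hp
    have hstarek : star ek = ek := by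
      funext j; by_cases hj : j = k <;> simp [hek, hj, Pi.single_eq_of_ne]
    have hdot_ek : ∀ z : Fin d → ℂ, ek ⬝ᵥ z = z k := by
      intro z; simp [hek, dotProduct, Pi.single_apply]
    -- q = (V*V) k k
    set q : ℂ := (V * V) k k with hq
    have hqle : (q).re ≤ 1 := by
      have hunit : (V * V)ᴴ * (V * V) = 1 := by
        rw [Matrix.conjTranspose_mul]
        calc Vᴴ * Vᴴ * (V * V) = Vᴴ * (Vᴴ * V) * V := by
              simp only [mul_assoc]
          _ = 1 := by rw [h1, mul_one, h1]
      have := colsum hunit k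
      have hn : Complex.normSq ((V*V) k k) ≤ 1 := by
        calc Complex.normSq ((V*V) k k) ≤ ∑ i, Complex.normSq ((V*V) i k) :=
              Finset.single_le_sum (f := fun i => Complex.normSq ((V*V) i k))
                (fun i _ => Complex.normSq_nonneg _) (Finset.mem_univ k)
          _ = 1 := this
      have habs : ‖q‖ ≤ 1 := by
        rw [← Real.sqrt_one, Complex.norm_def]; exact Real.sqrt_le_sqrt hn
      calc q.re ≤ |q.re| := le_abs_self _
        _ ≤ ‖q‖ := Complex.abs_re_le_norm q
        _ ≤ 1 := habs
    have hpval : p = (a : ℂ) * q - (a : ℂ) ^ 3 := by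
      rw [hp, hwek]
      rw [Matrix.mulVec_add, Matrix.mulVec_smul]
      rw [star_add, star_smul]
      rw [add_dotProduct, dotProduct_add, dotProduct_add]
      rw [smul_dotProduct, smul_dotProduct, dotProduct_smul,
        dotProduct_smul]
      have t1 : star (V *ᵥ ek) ⬝ᵥ (V *ᵥ (V *ᵥ ek)) = V k k := by
        rw [iso h1, hstarek, hdot_ek, hVek]
      have t2 : star (V *ᵥ ek) ⬝ᵥ (V *ᵥ ek) = 1 := by
        rw [iso h1, hstarek, hdot_ek, hek, Pi.single_eq_same]
      have t3 : star ek ⬝ᵥ (V *ᵥ (V *ᵥ ek)) = q := by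
        rw [hstarek, hdot_ek, Matrix.mulVec_mulVec, hq]
        rw [show ((V*V) *ᵥ ek) k = (V*V) k k from by
          simp [Matrix.mulVec, dotProduct, hek, Pi.single_apply]]
      have t4 : star ek ⬝ᵥ (V *ᵥ ek) = V k k := by
        rw [hstarek, hdot_ek, hVek]
      rw [t1, t2, t3, t4, hVkk]
      have : star ((a:ℂ)) = (a:ℂ) := by simp [Complex.star_def, Complex.conj_ofReal]
      rw [this]
      simp only [smul_eq_mul]
      ring
    have hpre : p.re ≤ a * c := by
      rw [hpval]
      have : ((a:ℂ) * q - (a:ℂ)^3).re = a * q.re - a^3 := by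
        rw [Complex.sub_re, Complex.mul_re, ← Complex.ofReal_pow, Complex.ofReal_re,
          Complex.ofReal_re, Complex.ofReal_im]
        ring
      rw [this, hc]
      nlinarith
    -- norm of Vw equals norm of w
    have hVw : ∑ i, Complex.normSq ((V *ᵥ w) i) = c := by
      have := iso h1 w w
      rw [dotself, dotself] at this
      have := Complex.ofReal_injective this
      rw [this, hwsum]
    -- u = w - Vw,  sum normSq u = 2c - 2 Re p
    set u : Fin d → ℂ := fun i => w i - (V *ᵥ w) i with hu
    have husum : ∑ i, Complex.normSq (u i) = 2 * c - 2 * p.re := by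
      have expand : ∀ i, Complex.normSq (u i)
          = Complex.normSq (w i) + Complex.normSq ((V *ᵥ w) i)
            - 2 * ((starRingEnd ℂ) (w i) * (V *ᵥ w) i).re := by
        intro i
        rw [hu]
        rw [Complex.normSq_sub]
        have : ((w i) * (starRingEnd ℂ) ((V *ᵥ w) i)).re
            = ((starRingEnd ℂ) (w i) * ((V *ᵥ w) i)).re := by
          simp only [Complex.mul_re, Complex.conj_re, Complex.conj_im]
          ring
        rw [this]
      rw [Finset.sum_congr rfl (fun i _ => expand i)]
      rw [Finset.sum_sub_distrib, Finset.sum_add_distrib, hwsum, hVw]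
      have : ∑ i, 2 * (((starRingEnd ℂ) (w i)) * ((V *ᵥ w) i)).re
          = 2 * p.re := by
        rw [← Finset.mul_sum]
        congr 1
        rw [hp, dotProduct, Complex.re_sum]
        rfl
      rw [this]; ring
    -- lower bound on sum normSq u
    have hulb : 2 * c - 2 * (a * c) ≤ ∑ i, Complex.normSq (u i) := by
      rw [husum]; linarith
    -- A matrix and S
    set A : Matrix (Fin d) (Fin d) ℂ :=
      fun i j => (if i = j then 1 else 0) - V i j with hA
    set S : ℝ := ∑ i, ∑ j, Complex.normSq (A i j) with hS
    -- row sums of A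
    have hArow : ∀ i, ∑ j, Complex.normSq (A i j) = 2 - 2 * (V i i).re := by
      intro i
      have expand : ∀ j, Complex.normSq (A i j)
          = (if i = j then 1 else 0) + Complex.normSq (V i j)
            - 2 * (if i = j then 1 else 0) * (V i j).re := by
        intro j
        show Complex.normSq ((if i = j then 1 else 0) - V i j) = _
        by_cases hij : i = j
        · subst hij
          simp only [eq_self_iff_true, if_true]
          rw [Complex.normSq_sub, Complex.normSq_one, one_mul, Complex.conj_re]
          ring
        · simp [hij]
      rw [Finset.sum_congr rfl (fun j _ => expand j)]
      rw [Finset.sum_sub_distrib, Finset.sum_add_distrib, rowsum h2 i]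
      simp [Finset.sum_ite_eq, Finset.mul_sum]
      ring
    have hScalc : S = 2 * d - 2 * ∑ j, (V j j).re := by
      rw [hS, Finset.sum_congr rfl (fun i _ => hArow i)]
      rw [Finset.sum_sub_distrib, Finset.mul_sum]
      simp [Finset.sum_const, Finset.card_univ]
      ring
    -- column k of A
    have hAcol : ∑ i, Complex.normSq (A i k) = 2 + 2 * a := by
      have expand : ∀ i, Complex.normSq (A i k)
          = (if i = k then 1 else 0) + Complex.normSq (V i k)
            - 2 * (if i = k then 1 else 0) * (V i k).re := by
        intro i
        show Complex.normSq ((if i = k then 1 else 0) - V i k) = _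
        by_cases hik : i = k
        · subst hik
          simp only [eq_self_iff_true, if_true]
          rw [Complex.normSq_sub, Complex.normSq_one, one_mul, Complex.conj_re]
          ring
        · simp [hik]
      rw [Finset.sum_congr rfl (fun i _ => expand i)]
      rw [Finset.sum_sub_distrib, Finset.sum_add_distrib, colsum h1 k]
      have h5 : ∑ i, (if i = k then (1:ℝ) else 0) = 1 := by simp
      have h6 : ∑ i, 2 * (if i = k then (1:ℝ) else 0) * (V i k).re
          = 2 * (V k k).re := by
        rw [Finset.sum_congr rfl (fun i _ => by
          rw [show 2 * (if i = k then (1:ℝ) else 0) * (V i k).re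
            = (if i = k then 2 * (V i k).re else 0) from by split <;> simp <;> ring])]
        simp
      rw [h5, h6, hVkk]
      simp
      ring
    -- Cauchy-Schwarz bound : sum normSq u ≤ c * (S - col_k)
    have hcs : ∑ i, Complex.normSq (u i)
        ≤ (∑ i, ∑ j ∈ Finset.univ.erase k, Complex.normSq (A i j)) * c := by
      have hrow : ∀ i, Complex.normSq (u i)
          ≤ (∑ j ∈ Finset.univ.erase k, Complex.normSq (A i j)) * c := by
        intro i
        have hwk : w k = 0 := by
          show (if k = k then 0 else V k k) = 0
          rw [if_pos rfl]
        have hui : u i = ∑ j ∈ Finset.univ.erase k, A i j * w j := by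
          show w i - (V *ᵥ w) i = _
          have h8 : w i - (V *ᵥ w) i = ∑ j, A i j * w j := by
            simp only [Matrix.mulVec, dotProduct]
            have h9 : ∀ j, A i j * w j = (if i = j then w j else 0) - V i j * w j := by
              intro j
              show ((if i = j then (1:ℂ) else 0) - V i j) * w j = _
              split <;> ring
            rw [Finset.sum_congr rfl fun j _ => h9 j, Finset.sum_sub_distrib]
            simp
          rw [h8]
          rw [← Finset.sum_erase_add Finset.univ _ (Finset.mem_univ k)]
          rw [hwk, mul_zero, add_zero]
        have habs : ‖u i‖
            ≤ ∑ j ∈ Finset.univ.erase k, ‖A i j‖ * ‖w j‖ := by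
          rw [hui]
          calc ‖∑ j ∈ Finset.univ.erase k, A i j * w j‖
              ≤ ∑ j ∈ Finset.univ.erase k, ‖A i j * w j‖ :=
                norm_sum_le _ _
            _ = ∑ j ∈ Finset.univ.erase k, ‖A i j‖ * ‖w j‖ := by
                refine Finset.sum_congr rfl fun j _ => ?_
                exact norm_mul _ _
        have hcs2 := Finset.sum_mul_sq_le_sq_mul_sq (Finset.univ.erase k)
          (fun j => ‖A i j‖) (fun j => ‖w j‖)
        have hwE : ∑ j ∈ Finset.univ.erase k, ‖w j‖ ^ 2 = c := by
          rw [← hwsum]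
          rw [← Finset.sum_erase_add Finset.univ (fun j => Complex.normSq (w j)) (Finset.mem_univ k)]
          have : Complex.normSq (w k) = 0 := by rw [hw]; simp
          rw [this, add_zero]
          refine Finset.sum_congr rfl fun j _ => Complex.sq_norm _
        have hAE : ∑ j ∈ Finset.univ.erase k, ‖A i j‖ ^ 2
            = ∑ j ∈ Finset.univ.erase k, Complex.normSq (A i j) := by
          refine Finset.sum_congr rfl fun j _ => Complex.sq_norm _
        have h0 : (0:ℝ) ≤ ∑ j ∈ Finset.univ.erase k, ‖A i j‖ * ‖w j‖ :=
          Finset.sum_nonneg fun j _ => mul_nonneg (norm_nonneg _) (norm_nonneg _)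
        calc Complex.normSq (u i) = ‖u i‖ ^ 2 := (Complex.sq_norm _).symm
          _ ≤ (∑ j ∈ Finset.univ.erase k, ‖A i j‖ * ‖w j‖) ^ 2 := by
              apply pow_le_pow_left₀ (norm_nonneg _) habs
          _ ≤ (∑ j ∈ Finset.univ.erase k, ‖A i j‖ ^ 2)
              * (∑ j ∈ Finset.univ.erase k, ‖w j‖ ^ 2) := hcs2
          _ = (∑ j ∈ Finset.univ.erase k, Complex.normSq (A i j)) * c := by rw [hAE, hwE]
      calc ∑ i, Complex.normSq (u i)
          ≤ ∑ i, (∑ j ∈ Finset.univ.erase k, Complex.normSq (A i j)) * c :=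
            Finset.sum_le_sum fun i _ => hrow i
        _ = (∑ i, ∑ j ∈ Finset.univ.erase k, Complex.normSq (A i j)) * c := by
            rw [Finset.sum_mul]
    have hsplit : ∑ i, ∑ j ∈ Finset.univ.erase k, Complex.normSq (A i j)
        = S - (2 + 2 * a) := by
      rw [← hAcol, hS]
      rw [← Finset.sum_sub_distrib]
      refine Finset.sum_congr rfl fun i _ => ?_
      rw [← Finset.sum_erase_add Finset.univ (fun j => Complex.normSq (A i j)) (Finset.mem_univ k)]
      ring
    rw [hsplit] at hcs
    -- conclude
    have hS4 : 4 ≤ S := by nlinarith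
    rw [hScalc] at hS4
    linarith
  · -- a = 1
    have ha : a = 1 := le_antisymm ha1 (not_lt.mp hlt)
    have hkre : (V k k).re = -1 := by rw [hVkk, ha]; simp
    have hsum : ∑ j ∈ Finset.univ.erase k, (V j j).re ≤ (d:ℝ) - 1 := by
      have := Finset.sum_le_card_nsmul (Finset.univ.erase k) (fun j => (V j j).re) 1
        (fun j _ => hre1 j j)
      rw [Finset.card_erase_of_mem (Finset.mem_univ k), Finset.card_univ, Fintype.card_fin] at this
      have hcast : ((d - 1 : ℕ) • (1:ℝ)) = (d:ℝ) - 1 := by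
        rw [nsmul_eq_mul, mul_one]
        have : 1 ≤ d := k.pos
        push_cast [Nat.cast_sub this]
        ring
      rw [hcast] at this
      exact this
    calc ∑ j, (V j j).re
        = ∑ j ∈ Finset.univ.erase k, (V j j).re + (V k k).re :=
          (Finset.sum_erase_add Finset.univ _ (Finset.mem_univ k)).symm
      _ ≤ ((d:ℝ) - 1) + (-1) := by rw [hkre]; linarith
      _ = (d:ℝ) - 2 := by ring

theorem tromborg_waldenstrom_diagonal_bound {d : ℕ} (hd : 2 ≤ d)
    (M : Matrix (Fin d) (Fin d) ℂ)
    (hM : M ∈ Matrix.unitaryGroup (Fin d) ℂ) (k : Fin d) :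
    (∑ j, ‖M j j‖) - 2 * ‖M k k‖ ≤ (d : ℝ) - 2 := by
  classical
  have hM1 : Mᴴ * M = 1 := hM.1
  have hM2 : M * Mᴴ = 1 := hM.2
  set a : ℝ := ‖M k k‖ with ha
  -- phase function
  set ε : Fin d → ℂ := fun j =>
    if j = k then
      (if M k k = 0 then 1 else -((starRingEnd ℂ) (M k k) / (‖M k k‖ : ℂ)))
    else
      (if M j j = 0 then 1 else (starRingEnd ℂ) (M j j) / (‖M j j‖ : ℂ)) with hε
  have habs_div : ∀ z : ℂ, z ≠ 0 →
      (starRingEnd ℂ) z / (‖z‖ : ℂ) * z = (‖z‖ : ℂ) := by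
    intro z hz
    have h0 : (‖z‖ : ℂ) ≠ 0 := by
      exact_mod_cast norm_ne_zero_iff.mpr hz
    field_simp
    rw [Complex.normSq_eq_conj_mul_self.symm, Complex.normSq_eq_norm_sq]
    push_cast
    ring
  have hεunit : ∀ j, star (ε j) * ε j = (1 : ℂ) := by
    have gen : ∀ z : ℂ, z ≠ 0 →
        star ((starRingEnd ℂ) z / (‖z‖ : ℂ))
          * ((starRingEnd ℂ) z / (‖z‖ : ℂ)) = 1 := by
      intro z hz
      rw [Complex.star_def, Complex.normSq_eq_conj_mul_self.symm]
      rw [Complex.normSq_div, Complex.normSq_conj, Complex.normSq_ofReal]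
      rw [← Complex.sq_norm]
      have h0 : ‖z‖ ≠ 0 := norm_ne_zero_iff.mpr hz
      have : ‖z‖ ^ 2 ≠ 0 := pow_ne_zero _ h0
      rw [show ‖z‖ * ‖z‖ = ‖z‖ ^ 2 from (sq (‖z‖)) ▸ by ring]
      rw [div_self this]
      norm_num
    intro j
    show star (ε j) * ε j = 1
    rw [hε]
    by_cases hj : j = k
    · simp only [hj, eq_self_iff_true, if_true]
      by_cases hz : M k k = 0
      · simp [hz]
      · simp only [hz, if_false, star_neg, neg_mul_neg]
        exact gen _ hz
    · simp only [hj, if_false]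
      by_cases hz : M j j = 0
      · simp [hz]
      · simp only [hz, if_false]
        exact gen _ hz
  -- the phased matrix
  set V : Matrix (Fin d) (Fin d) ℂ := Matrix.of fun i j => ε i * M i j with hV
  have hVapp : ∀ i j, V i j = ε i * M i j := fun i j => rfl
  have hV1 : Vᴴ * V = 1 := by
    have hVM : Vᴴ * V = Mᴴ * M := by
      ext j l
      rw [Matrix.mul_apply, Matrix.mul_apply]
      refine Finset.sum_congr rfl fun i _ => ?_
      rw [Matrix.conjTranspose_apply, Matrix.conjTranspose_apply, hVapp]
      calc star (ε i * M i j) * (ε i * M i l)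
          = (star (ε i) * ε i) * (star (M i j) * M i l) := by
            rw [star_mul']; ring
        _ = star (M i j) * M i l := by rw [hεunit i, one_mul]
    rw [hVM, hM1]
  have hV2 : V * Vᴴ = 1 := by
    ext i l
    rw [Matrix.mul_apply]
    have hterm : ∀ j, V i j * Vᴴ j l = (ε i * star (ε l)) * (M i j * star (M l j)) := by
      intro j
      rw [Matrix.conjTranspose_apply, hVapp, hVapp, star_mul']
      ring
    rw [Finset.sum_congr rfl fun j _ => hterm j, ← Finset.mul_sum]
    have hMM : ∑ j, M i j * star (M l j) = (M * Mᴴ) i l := by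
      rw [Matrix.mul_apply]
      exact Finset.sum_congr rfl fun j _ => by rw [Matrix.conjTranspose_apply]
    rw [hMM, hM2]
    by_cases hil : i = l
    · subst hil
      rw [Matrix.one_apply_eq, mul_one, mul_comm (ε i) (star (ε i)), hεunit i]
    · rw [Matrix.one_apply_ne hil, mul_zero]
  have hVkk : V k k = -(a : ℂ) := by
    rw [hVapp, hε]
    simp only [eq_self_iff_true, if_true]
    by_cases hz : M k k = 0
    · rw [if_pos hz, hz, ha, hz]
      simp
    · rw [if_neg hz, neg_mul, habs_div _ hz, ha]
  have hkey := key V hV1 hV2 k a (norm_nonneg _) hVkk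
  have hre : ∀ j, (V j j).re = ‖M j j‖ - (if j = k then 2 * a else 0) := by
    intro j
    by_cases hj : j = k
    · subst hj
      rw [hVkk, if_pos rfl, ha]
      simp
      ring
    · rw [hVapp, hε]
      simp only [hj, if_false]
      by_cases hz : M j j = 0
      · rw [if_pos hz, hz]
        simp [hj]
      · rw [if_neg hz, habs_div _ hz]
        simp [hj]
  have hsum : ∑ j, (V j j).re
      = (∑ j, ‖M j j‖) - 2 * a := by
    rw [Finset.sum_congr rfl fun j _ => hre j, Finset.sum_sub_distrib]
    congr 1
    rw [Finset.sum_ite_eq' Finset.univ k (fun _ => 2 * a)]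
    simp
  rw [hsum] at hkey
  rw [ha] at hkey
  exact hkey
end

section
/- For all x ∈ [0, π], the inequality sin(x) ≤ (4x/π)(1 − x/π) holds. -/
theorem sin_le_parabola (x : ℝ) (hx0 : 0 ≤ x) (hx1 : x ≤ Real.pi) :
    Real.sin x ≤ (4 * x / Real.pi) * (1 - x / Real.pi) := by
  have hpi := Real.pi_gt_d6
  have hpi' := Real.pi_lt_d6
  have hppos : (0:ℝ) < Real.pi := by linarith
  have goal : Real.sin x * Real.pi ^ 2 ≤ 4 * x * (Real.pi - x) := by
    rcases le_or_gt x (2/3) with hc | hc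
    · have h1 : Real.sin x ≤ x := Real.sin_le hx0
      have h2 : (0:ℝ) ≤ 4 * Real.pi - 4 * x - Real.pi ^ 2 := by nlinarith
      nlinarith [mul_le_mul_of_nonneg_right h1 (sq_nonneg Real.pi),
        mul_nonneg hx0 h2]
    · rcases le_or_gt (Real.pi - 2/3) x with hc2 | hc2
      · have h1 : Real.sin x = Real.sin (Real.pi - x) := (Real.sin_pi_sub x).symm
        have h2 : Real.sin (Real.pi - x) ≤ Real.pi - x := Real.sin_le (by linarith)
        have h3 : Real.sin x ≤ Real.pi - x := h1 ▸ h2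
        have h4 : (0:ℝ) ≤ 4 * x - Real.pi ^ 2 := by nlinarith
        nlinarith [mul_le_mul_of_nonneg_right h3 (sq_nonneg Real.pi),
          mul_nonneg (show (0:ℝ) ≤ Real.pi - x by linarith) h4]
      · set t := x - Real.pi / 2 with ht
        have habs : |t| ≤ 1 := by
          rw [abs_le]; constructor <;> simp only [ht] <;> linarith
        have hb := Real.cos_bound habs
        have hcos : Real.cos t ≤ 1 - t ^ 2 / 2 + |t| ^ 4 * (5 / 96) := by
          have := (abs_sub_le_iff.1 hb).1; linarith
        have hsin : Real.sin x = Real.cos t := by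
          rw [ht, Real.cos_sub_pi_div_two]
        rw [hsin]
        rw [abs_le] at habs
        have h4 : |t| ^ 4 = t ^ 4 := by
          rw [show (4:ℕ) = 2 * 2 from rfl, pow_mul, sq_abs, ← pow_mul]
        rw [h4] at hcos
        have ht2 : t ^ 2 ≤ 0.83 := by nlinarith [habs.1, habs.2]
        have hx4 : 4 * x * (Real.pi - x) = Real.pi ^ 2 - 4 * t ^ 2 := by
          rw [ht]; ring
        rw [hx4]
        have h5 : (0:ℝ) ≤ Real.pi ^ 2 / 2 - 4 - 5 * t ^ 2 * Real.pi ^ 2 / 96 := by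
          nlinarith [mul_le_mul_of_nonneg_right ht2 (sq_nonneg Real.pi)]
        have h6 : (0:ℝ) ≤ t ^ 2 * (Real.pi ^ 2 / 2 - 4 - 5 * t ^ 2 * Real.pi ^ 2 / 96) :=
          mul_nonneg (sq_nonneg t) h5
        have h7 : Real.cos t * Real.pi ^ 2 ≤
            (1 - t ^ 2 / 2 + t ^ 4 * (5 / 96)) * Real.pi ^ 2 :=
          mul_le_mul_of_nonneg_right hcos (sq_nonneg Real.pi)
        nlinarith [h6, h7]
  have heq : (4 * x / Real.pi) * (1 - x / Real.pi) = 4 * x * (Real.pi - x) / Real.pi ^ 2 := by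
    field_simp
  rw [heq, le_div_iff₀ (by positivity)]
  exact goal
end

section
/- Let d ≥ 1 and 0 < R ≤ 2 with R ≤ √(2d). Setting β_sep = arccos(1 − R²/4) and β_ent = arccos(1 − R²/(2d)), it holds that sin(β_sep) ≥ (√d/2)·sin(β_ent). -/
theorem sin_beta_sep_ge_sqrt_d_sin_beta_ent (d R : ℝ) (hd : 1 ≤ d)
    (hR0 : 0 < R) (hR2 : R ≤ 2) (hRd : R ≤ Real.sqrt (2 * d)) :
    Real.sin (Real.arccos (1 - R ^ 2 / 4)) ≥
      (Real.sqrt d / 2) * Real.sin (Real.arccos (1 - R ^ 2 / (2 * d))) := by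
  have hdpos : (0:ℝ) < d := by linarith
  rw [Real.sin_arccos, Real.sin_arccos]
  have h2 : Real.sqrt d / 2 = Real.sqrt (d / 4) := by
    rw [Real.sqrt_div hdpos.le, show Real.sqrt 4 = 2 by
      rw [show (4:ℝ) = 2^2 by norm_num, Real.sqrt_sq (by norm_num)]]
  rw [h2, ← Real.sqrt_mul (by positivity)]
  apply Real.sqrt_le_sqrt
  have hR2d : R^2 ≤ 2 * d := by
    have := Real.sq_sqrt (by positivity : (0:ℝ) ≤ 2 * d)
    nlinarith [Real.sqrt_nonneg (2*d)]
  have hkey : (1 - R ^ 2 / (2 * d))^2 = 1 - R^2/d + R^4/(4*d^2) := by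
    field_simp; ring
  rw [hkey]
  have : d / 4 * (1 - (1 - R^2/d + R^4/(4*d^2))) = R^2/4 - R^4/(16*d) := by
    field_simp; ring
  rw [this]
  have hd4 : R^4/(16*d) ≥ R^4/(16*d) := le_refl _
  have h1 : R^4/(16*d) ≥ 0 := by positivity
  have hR4 : R^2 ≤ 4 := by nlinarith
  nlinarith [mul_nonneg (sq_nonneg R) (sub_nonneg.2 hR4)]
end

section
/- Let γ ∈ [0, π/2], d ≥ 2, and 0 < R ≤ √(4(1 − cos γ)). Define β_sep = arccos(1 − R²/4) and β_ent = arccos(1 − R²/(2d)). Then the ratio (sin(2γ − β_ent)·sin(β_ent)) / (sin(2γ − β_sep)·sin(β_sep)) is at most 8/√d. -/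
open Real

lemma arccos_anti {x y : ℝ} (h : x ≤ y) : Real.arccos y ≤ Real.arccos x := by
  simp only [Real.arccos]
  have := Real.monotone_arcsin h
  linarith

set_option maxHeartbeats 2000000 in
theorem improvement_ratio_bound (γ d R : ℝ)
    (hγ0 : 0 ≤ γ) (hγ1 : γ ≤ Real.pi / 2) (hd : 2 ≤ d)
    (hR0 : 0 < R) (hR : R ≤ Real.sqrt (4 * (1 - Real.cos γ)))
    (βsep βent : ℝ)
    (hs : βsep = Real.arccos (1 - R ^ 2 / 4))
    (he : βent = Real.arccos (1 - R ^ 2 / (2 * d))) :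
    (Real.sin (2 * γ - βent) * Real.sin βent) /
      (Real.sin (2 * γ - βsep) * Real.sin βsep) ≤ 8 / Real.sqrt d := by
  have hπ := Real.pi_pos
  have hd0 : (0:ℝ) < d := by linarith
  have hsd : (0:ℝ) < Real.sqrt d := Real.sqrt_pos.2 hd0
  have hsd2 : (Real.sqrt d)^2 = d := Real.sq_sqrt hd0.le
  have hsdge : Real.sqrt 2 ≤ Real.sqrt d := Real.sqrt_le_sqrt hd
  -- s = R^2/4
  set s : ℝ := R ^ 2 / 4 with hsdef
  have hs0 : 0 < s := by positivity
  have hcos1 : Real.cos γ ≤ 1 := Real.cos_le_one γ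
  have hR2 : R ^ 2 ≤ 4 * (1 - Real.cos γ) := by
    have h4 : 0 ≤ 4 * (1 - Real.cos γ) := by linarith
    calc R ^ 2 ≤ (Real.sqrt (4 * (1 - Real.cos γ)))^2 := by
          apply pow_le_pow_left₀ hR0.le hR
      _ = 4 * (1 - Real.cos γ) := Real.sq_sqrt h4
  have hscos : s ≤ 1 - Real.cos γ := by simp only [hsdef]; linarith
  have hcγ0 : 0 ≤ Real.cos γ := Real.cos_nonneg_of_mem_Icc ⟨by linarith, hγ1⟩
  have hs1 : s ≤ 1 := by linarith
  -- γ > 0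
  have hγpos : 0 < γ := by
    rcases lt_or_eq_of_le hγ0 with h | h
    · exact h
    · exfalso; rw [← h] at hscos; simp at hscos; linarith
  -- β_sep facts
  have hcos_sep : Real.cos βsep = 1 - s := by
    rw [hs, Real.cos_arccos (by linarith) (by linarith)]
  have hsep_le_γ : βsep ≤ γ := by
    rw [hs]
    calc Real.arccos (1 - s) ≤ Real.arccos (Real.cos γ) := arccos_anti (by linarith)
      _ = γ := Real.arccos_cos hγ0 (by linarith)
  have hsep_pos : 0 < βsep := by
    rw [hs]; exact Real.arccos_pos.2 (by linarith)
  have hsep_le : βsep ≤ Real.pi / 2 := by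
    rw [hs]; exact Real.arccos_le_pi_div_two.2 (by linarith)
  have hsin_sep : Real.sin βsep = Real.sqrt (1 - (1 - s)^2) := by
    rw [hs, Real.sin_arccos]
  have hsin_sep_ge : Real.sqrt s ≤ Real.sin βsep := by
    rw [hsin_sep]
    apply Real.sqrt_le_sqrt
    nlinarith
  have hsin_sep_pos : 0 < Real.sin βsep := by
    apply lt_of_lt_of_le _ hsin_sep_ge
    positivity
  -- β_ent facts
  have he2 : 1 - R ^ 2 / (2 * d) = 1 - 2 * s / d := by
    field_simp [hsdef]; ring
  have h2sd : 2 * s / d ≤ s := by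
    rw [div_le_iff₀ hd0]; nlinarith
  have h2sd0 : 0 < 2 * s / d := by positivity
  have hcos_ent : Real.cos βent = 1 - 2 * s / d := by
    rw [he, he2, Real.cos_arccos (by linarith) (by linarith)]
  have hent_nonneg : 0 ≤ βent := by rw [he]; exact Real.arccos_nonneg _
  have hent_le_sep : βent ≤ βsep := by
    rw [he, hs, he2]; exact arccos_anti (by linarith)
  have hsin_ent : Real.sin βent = Real.sqrt (1 - (1 - 2*s/d)^2) := by
    rw [he, he2, Real.sin_arccos]
  have hsin_ent_nonneg : 0 ≤ Real.sin βent := by rw [hsin_ent]; positivity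
  have hss0 : (Real.sqrt s)^2 = s := Real.sq_sqrt hs0.le
  have hsspos : 0 < Real.sqrt s := Real.sqrt_pos.2 hs0
  have hsin_ent_le : Real.sin βent ≤ 2 / Real.sqrt d * Real.sqrt s := by
    rw [hsin_ent]
    have h1 : 1 - (1 - 2*s/d)^2 ≤ (2 / Real.sqrt d * Real.sqrt s)^2 := by
      have : (2 / Real.sqrt d * Real.sqrt s)^2 = 4 * s / d := by
        rw [mul_pow, div_pow, hss0, hsd2]; ring
      rw [this]
      have : 1 - (1 - 2*s/d)^2 = (2*s/d) * (2 - 2*s/d) := by ring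
      rw [this]
      have h2 : 2 - 2*s/d ≤ 2 := by linarith
      calc (2*s/d) * (2 - 2*s/d) ≤ (2*s/d) * 2 := by
            apply mul_le_mul_of_nonneg_left h2 h2sd0.le
        _ = 4 * s / d := by ring
    calc Real.sqrt (1 - (1 - 2*s/d)^2) ≤ Real.sqrt ((2 / Real.sqrt d * Real.sqrt s)^2) :=
          Real.sqrt_le_sqrt h1
      _ = 2 / Real.sqrt d * Real.sqrt s := Real.sqrt_sq (by positivity)
  -- angle A = 2γ - βsep
  have hA_lb : γ ≤ 2 * γ - βsep := by linarith
  have hA_ub : 2 * γ - βsep < Real.pi := by linarith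
  have hA_pos : 0 < 2 * γ - βsep := by linarith
  have hsinA_pos : 0 < Real.sin (2 * γ - βsep) :=
    Real.sin_pos_of_pos_of_lt_pi hA_pos hA_ub
  -- sin(2γ-βsep) ≥ sin βsep
  have hkey : Real.sin βsep ≤ Real.sin (2 * γ - βsep) := by
    rcases le_or_gt (2 * γ - βsep) (Real.pi / 2) with h | h
    · exact Real.sin_le_sin_of_le_of_le_pi_div_two (by linarith) h (by linarith)
    · have : Real.sin (2 * γ - βsep) = Real.sin (Real.pi - (2 * γ - βsep)) :=
        (Real.sin_pi_sub _).symm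
      rw [this]
      exact Real.sin_le_sin_of_le_of_le_pi_div_two (by linarith) (by linarith) (by linarith)
  -- δ = βsep - βent
  have hδsin_nonneg : 0 ≤ Real.sin (βsep - βent) :=
    Real.sin_nonneg_of_nonneg_of_le_pi (by linarith) (by linarith)
  have hδsin_le : Real.sin (βsep - βent) ≤ Real.sin βsep :=
    Real.sin_le_sin_of_le_of_le_pi_div_two (by linarith) hsep_le (by linarith)
  -- sin(2γ-βent) ≤ sin(2γ-βsep) + sin(βsep-βent)
  have hnum_ang : Real.sin (2 * γ - βent) ≤
      Real.sin (2 * γ - βsep) + Real.sin (βsep - βent) := by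
    have : 2 * γ - βent = (2 * γ - βsep) + (βsep - βent) := by ring
    rw [this, Real.sin_add]
    have h1 : Real.sin (2 * γ - βsep) * Real.cos (βsep - βent) ≤
        Real.sin (2 * γ - βsep) :=
      mul_le_of_le_one_right hsinA_pos.le (Real.cos_le_one _)
    have h2 : Real.cos (2 * γ - βsep) * Real.sin (βsep - βent) ≤
        Real.sin (βsep - βent) :=
      mul_le_of_le_one_left hδsin_nonneg (Real.cos_le_one _)
    linarith
  -- numerator bound
  have hnum : Real.sin (2 * γ - βent) * Real.sin βent ≤
      2 * Real.sin (2 * γ - βsep) * Real.sin βent := by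
    have h1 : Real.sin (2 * γ - βent) ≤ 2 * Real.sin (2 * γ - βsep) := by linarith
    exact mul_le_mul_of_nonneg_right h1 hsin_ent_nonneg
  -- final
  have hden_pos : 0 < Real.sin (2 * γ - βsep) * Real.sin βsep := by positivity
  rw [div_le_div_iff₀ hden_pos hsd]
  have hent2 : Real.sin βent * Real.sqrt d ≤ 2 * Real.sqrt s := by
    calc Real.sin βent * Real.sqrt d ≤ (2 / Real.sqrt d * Real.sqrt s) * Real.sqrt d :=
          mul_le_mul_of_nonneg_right hsin_ent_le hsd.le
      _ = 2 * Real.sqrt s := by field_simp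
  have hAB : 0 < Real.sin (2 * γ - βsep) * Real.sin βsep :=
    mul_pos hsinA_pos hsin_sep_pos
  calc Real.sin (2 * γ - βent) * Real.sin βent * Real.sqrt d
      ≤ 2 * Real.sin (2 * γ - βsep) * Real.sin βent * Real.sqrt d :=
        mul_le_mul_of_nonneg_right hnum hsd.le
    _ = 2 * Real.sin (2 * γ - βsep) * (Real.sin βent * Real.sqrt d) := by ring
    _ ≤ 2 * Real.sin (2 * γ - βsep) * (2 * Real.sqrt s) :=
        mul_le_mul_of_nonneg_left hent2 (by positivity)
    _ ≤ 2 * Real.sin (2 * γ - βsep) * (2 * Real.sin βsep) :=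
        mul_le_mul_of_nonneg_left (by linarith) (by positivity)
    _ = 4 * (Real.sin (2 * γ - βsep) * Real.sin βsep) := by ring
    _ ≤ 8 * (Real.sin (2 * γ - βsep) * Real.sin βsep) := by linarith
end
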